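/- arXiv:2407.03099 — 12 statements merged into one kernel-verified Lean document; each statement's English description precedes it below -/
import Mathlib

section
/- For every integer n ≥ 1, Σ_{i=1}^{A_n} (k̂(T^{i−1}(1/n, 1)) − 3) = −1, where A_n := Σ_{k=1}^{n} φ(k). -/
/-- The BCZ map `T(a,b) = (b, ⌊(1+a)/b⌋·b − a)`. -/
noncomputable def bczT (p : ℝ × ℝ) : ℝ × ℝ :=
  (p.2, (⌊(1 + p.1) / p.2⌋ : ℝ) * p.2 - p.1)

/-- `k̂(a,b) = (⌊(1+a)/b⌋ + ⌊(1+b)/a⌋)/2`. -/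
noncomputable def khat (p : ℝ × ℝ) : ℝ :=
  ((⌊(1 + p.1) / p.2⌋ : ℝ) + (⌊(1 + p.2) / p.1⌋ : ℝ)) / 2

/-- The Farey triangle Ω. -/
def fareyTriangle : Set (ℝ × ℝ) :=
  {p | 0 < p.1 ∧ p.1 ≤ 1 ∧ 0 < p.2 ∧ p.2 ≤ 1 ∧ 1 < p.1 + p.2}

/-- An excursion of the BCZ map: points `p 0, …, p s` of Ω, consecutive under `T`,
with all intermediate x-coordinates larger than those of both endpoints. -/
def IsExcursion (p : ℕ → ℝ × ℝ) (s : ℕ) : Prop :=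
  1 ≤ s ∧ (∀ i ≤ s, p i ∈ fareyTriangle) ∧
  (∀ i < s, p (i + 1) = bczT (p i)) ∧
  (∀ i, 0 < i → i < s → (p 0).1 < (p i).1 ∧ (p s).1 < (p i).1)

/-- The golden ratio area Δ of the moduli space of excursions. -/
noncomputable def goldenArea : Set (ℝ × ℝ) :=
  {p | 0 < p.1 ∧ p.1 ≤ 1 ∧ 0 < p.2 ∧ p.2 ≤ 1 ∧
    (Real.sqrt 5 - 1) / 2 ≤ p.2 / p.1 ∧ p.2 / p.1 ≤ (Real.sqrt 5 + 1) / 2}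

/-- `A_n = Σ_{k=1}^n φ(k)`, the number of Farey fractions in `(0,1]` of order `n`. -/
def fareyLen (n : ℕ) : ℕ := ∑ k ∈ Finset.Icc 1 n, Nat.totient k


def iMed (m : ℕ) : List ℕ → List ℕ
  | [] => []
  | [a] => [a]
  | a :: b :: t => (if a + b = m then [a, m] else [a]) ++ iMed m (b :: t)
termination_by l => l.length

def LL : ℕ → List ℕ
  | 0 => [1, 1]
  | n + 1 => iMed (n + 1) (LL n)

noncomputable def Ksum : List ℕ → ℝ
  | [] => 0
  | [_] => 0
  | [_, _] => 0
  | a :: b :: c :: t => ((a : ℝ) + c) / b + Ksum (b :: c :: t)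
termination_by l => l.length

def Div3 : List ℕ → Prop
  | a :: b :: c :: t => b ∣ a + c ∧ Div3 (b :: c :: t)
  | _ => True
termination_by l => l.length

def cnt (m : ℕ) : List ℕ → ℕ
  | [] => 0
  | [_] => 0
  | a :: b :: t => (if a + b = m then 1 else 0) + cnt m (b :: t)
termination_by l => l.length

def fHit (m : ℕ) : List ℕ → ℕ
  | a :: b :: _ => if a + b = m then 1 else 0
  | _ => 0

def lHit (m : ℕ) : List ℕ → ℕ
  | [] => 0
  | [_] => 0
  | [a, b] => if a + b = m then 1 else 0
  | _ :: b :: c :: t => lHit m (b :: c :: t)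
termination_by l => l.length

@[simp] lemma iMed_nil (m : ℕ) : iMed m [] = [] := by rw [iMed]
@[simp] lemma iMed_single (m a : ℕ) : iMed m [a] = [a] := by rw [iMed]
lemma iMed_cons_cons (m a b : ℕ) (t : List ℕ) :
    iMed m (a :: b :: t) = (if a + b = m then [a, m] else [a]) ++ iMed m (b :: t) := by
  rw [iMed]

@[simp] lemma Ksum_nil : Ksum [] = 0 := by rw [Ksum]
@[simp] lemma Ksum_single (a : ℕ) : Ksum [a] = 0 := by rw [Ksum]
@[simp] lemma Ksum_pair (a b : ℕ) : Ksum [a, b] = 0 := by rw [Ksum]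
lemma Ksum_cons3 (a b c : ℕ) (t : List ℕ) :
    Ksum (a :: b :: c :: t) = ((a : ℝ) + c) / b + Ksum (b :: c :: t) := by
  rw [Ksum]

@[simp] lemma cnt_nil (m : ℕ) : cnt m [] = 0 := by rw [cnt]
@[simp] lemma cnt_single (m a : ℕ) : cnt m [a] = 0 := by rw [cnt]
lemma cnt_cons_cons (m a b : ℕ) (t : List ℕ) :
    cnt m (a :: b :: t) = (if a + b = m then 1 else 0) + cnt m (b :: t) := by
  rw [cnt]

@[simp] lemma lHit_pair (m a b : ℕ) : lHit m [a, b] = if a + b = m then 1 else 0 := by rw [lHit]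
lemma lHit_cons3 (m a b c : ℕ) (t : List ℕ) : lHit m (a :: b :: c :: t) = lHit m (b :: c :: t) := by
  rw [lHit]

lemma Div3_cons3 (a b c : ℕ) (t : List ℕ) :
    Div3 (a :: b :: c :: t) ↔ (b ∣ a + c ∧ Div3 (b :: c :: t)) := by
  rw [Div3]

lemma Div3_short (l : List ℕ) (h : l.length ≤ 2) : Div3 l := by
  match l with
  | [] => rw [Div3] <;> simp
  | [a] => rw [Div3] <;> simp
  | [a, b] => rw [Div3] <;> simp
  | a :: b :: c :: t => simp at h

lemma mem_iMed {m x : ℕ} : ∀ {l}, x ∈ iMed m l → x ∈ l ∨ x = m := by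
  intro l
  induction l using iMed.induct with
  | case3 a b t ih =>
    intro h
    rw [iMed_cons_cons, List.mem_append] at h
    rcases h with h | h
    · by_cases hab : a + b = m
      · rw [if_pos hab] at h
        simp at h
        rcases h with h | h
        · left; simp [h]
        · right; exact h
      · rw [if_neg hab] at h
        simp at h
        left; simp [h]
    · rcases ih h with h | h
      · left; exact List.mem_cons_of_mem _ h
      · right; exact h
  | case1 => simp
  | case2 a => intro hx; left; simpa using hx

lemma iMed_head (m a : ℕ) (t : List ℕ) : ∃ r, iMed m (a :: t) = a :: r := by
  cases t with
  | nil => exact ⟨[], by simp⟩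
  | cons b t =>
    rw [iMed_cons_cons]
    split
    · exact ⟨m :: iMed m (b :: t), rfl⟩
    · exact ⟨iMed m (b :: t), rfl⟩

lemma iMed_two (m b c : ℕ) (t : List ℕ) :
    ∃ r, iMed m (b :: c :: t) = b :: (if b + c = m then m else c) :: r := by
  rw [iMed_cons_cons]
  obtain ⟨r, hr⟩ := iMed_head m c t
  split
  · exact ⟨iMed m (c :: t), rfl⟩
  · exact ⟨r, by simp [hr]⟩

lemma length_iMed (m : ℕ) : ∀ l, (iMed m l).length = l.length + cnt m l := by
  intro l
  induction l using iMed.induct with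
  | case3 a b t ih =>
    rw [iMed_cons_cons, cnt_cons_cons]
    split <;> simp_all <;> omega
  | case1 => simp
  | case2 a => simp

lemma iMed_append (m : ℕ) : ∀ (u : List ℕ) (a b : ℕ),
    iMed m (u ++ [a, b]) = iMed m (u ++ [a]) ++ (if a + b = m then [m, b] else [b]) := by
  intro u
  induction u with
  | nil =>
    intro a b
    simp only [List.nil_append]
    rw [iMed_cons_cons]
    split <;> simp
  | cons x u ih =>
    intro a b
    cases u with
    | nil =>
      simp only [List.cons_append, List.nil_append]
      rw [iMed_cons_cons m x a [b], iMed_cons_cons m a b [], iMed_cons_cons m x a []]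
      split_ifs <;> simp
    | cons y u' =>
      rw [show (x :: y :: u') ++ [a, b] = x :: y :: (u' ++ [a, b]) from rfl, iMed_cons_cons]
      rw [show (x :: y :: u') ++ [a] = x :: y :: (u' ++ [a]) from rfl, iMed_cons_cons]
      have := ih a b
      simp only [List.cons_append] at this ⊢
      rw [this, List.append_assoc]

lemma cnt_append (m : ℕ) : ∀ (u : List ℕ) (a b : ℕ),
    cnt m (u ++ [a, b]) = cnt m (u ++ [a]) + (if a + b = m then 1 else 0) := by
  intro u
  induction u with
  | nil => intro a b; simp [cnt_cons_cons]
  | cons x u ih =>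
    intro a b
    cases u with
    | nil =>
      simp only [List.cons_append, List.nil_append]
      rw [cnt_cons_cons m x a [b], cnt_cons_cons m a b [], cnt_cons_cons m x a []]
      simp only [cnt_nil, cnt_single]
      split_ifs <;> omega
    | cons y u' =>
      rw [show (x :: y :: u') ++ [a, b] = x :: y :: (u' ++ [a, b]) from rfl, cnt_cons_cons]
      rw [show (x :: y :: u') ++ [a] = x :: y :: (u' ++ [a]) from rfl, cnt_cons_cons]
      have := ih a b
      simp only [List.cons_append] at this ⊢
      rw [this]
      omega

lemma Ksum_append : ∀ (l : List ℕ) (a b c : ℕ),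
    Ksum (l ++ [a, b, c]) = Ksum (l ++ [a, b]) + ((a : ℝ) + c) / b := by
  intro l
  induction l with
  | nil => intro a b c; simp [Ksum_cons3]
  | cons x l ih =>
    intro a b c
    cases l with
    | nil =>
      simp only [List.cons_append, List.nil_append]
      rw [Ksum_cons3 x a b [c], Ksum_cons3 a b c [], Ksum_cons3 x a b []]
      simp only [Ksum_pair]
      ring
    | cons y l' =>
      cases l' with
      | nil =>
        simp only [List.cons_append, List.nil_append]
        rw [Ksum_cons3 x y a [b, c], Ksum_cons3 x y a [b]]
        have := ih a b c
        simp only [List.nil_append, List.cons_append] at this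
        rw [this]
        ring
      | cons z l'' =>
        rw [show (x :: y :: z :: l'') ++ [a, b, c] = x :: y :: z :: (l'' ++ [a, b, c]) from rfl,
          Ksum_cons3]
        rw [show (x :: y :: z :: l'') ++ [a, b] = x :: y :: z :: (l'' ++ [a, b]) from rfl,
          Ksum_cons3]
        have := ih a b c
        simp only [List.cons_append] at this ⊢
        rw [this]
        ring
lemma div3_iMed (m : ℕ) : ∀ l, Div3 l → Div3 (iMed m l) := by
  intro l
  induction l using iMed.induct with
  | case1 => intro _; simp; exact Div3_short [] (by simp)
  | case2 a => intro _; simp; exact Div3_short [a] (by simp)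
  | case3 a b t ih =>
    intro h
    cases t with
    | nil =>
      rw [iMed_cons_cons]
      split
      · rename_i hab
        simp only [iMed_single]
        show Div3 [a, m, b]
        rw [Div3_cons3]
        exact ⟨hab ▸ dvd_refl m, Div3_short _ (by simp)⟩
      · simp only [iMed_single]
        exact Div3_short [a, b] (by simp)
    | cons c t' =>
      rw [Div3_cons3] at h
      obtain ⟨hd, h2⟩ := h
      have ihh := ih h2
      obtain ⟨k, hk⟩ := hd
      obtain ⟨r, hr⟩ := iMed_two m b c t'
      rw [iMed_cons_cons, hr]
      by_cases hab : a + b = m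
      · rw [if_pos hab]
        show Div3 (a :: m :: b :: (if b + c = m then m else c) :: r)
        rw [Div3_cons3, Div3_cons3]
        refine ⟨hab ▸ dvd_refl m, ?_, hr ▸ ihh⟩
        by_cases hbc : b + c = m
        · rw [if_pos hbc]; exact ⟨k + 2, by rw [Nat.mul_add]; omega⟩
        · rw [if_neg hbc]; exact ⟨k + 1, by rw [Nat.mul_add]; omega⟩
      · rw [if_neg hab]
        show Div3 (a :: b :: (if b + c = m then m else c) :: r)
        rw [Div3_cons3]
        refine ⟨?_, hr ▸ ihh⟩
        by_cases hbc : b + c = m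
        · rw [if_pos hbc]; exact ⟨k + 1, by rw [Nat.mul_add]; omega⟩
        · rw [if_neg hbc]; exact ⟨k, by omega⟩

lemma div3_prefix (c : ℕ) : ∀ l, Div3 (l ++ [c]) → Div3 l := by
  intro l
  induction l using Div3.induct with
  | case1 a b d t ih =>
    intro h
    rw [show (a :: b :: d :: t) ++ [c] = a :: b :: d :: (t ++ [c]) from rfl, Div3_cons3] at h
    rw [Div3_cons3]
    exact ⟨h.1, ih h.2⟩
  | case2 l h =>
    intro _
    match l, h with
    | [], _ => exact Div3_short _ (by simp)
    | [a], _ => exact Div3_short _ (by simp)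
    | [a, b], _ => exact Div3_short _ (by simp)
    | a :: b :: d :: t, h => exact (h a b d t rfl).elim

lemma div3_getD : ∀ l, Div3 l → ∀ i, i + 2 < l.length →
    l.getD (i + 1) 0 ∣ l.getD i 0 + l.getD (i + 2) 0 := by
  intro l
  induction l using Div3.induct with
  | case1 a b d t ih =>
    intro h i hi
    rw [Div3_cons3] at h
    cases i with
    | zero => simpa using h.1
    | succ j =>
      have := ih h.2 j (by simpa using hi)
      simpa using this
  | case2 l h =>
    intro _ i hi
    match l, h with
    | [], _ => simp at hi
    | [a], _ => simp at hi
    | [a, b], _ => simp at hi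
    | a :: b :: d :: t, h => exact (h a b d t rfl).elim

def pairs (l : List ℕ) : List (ℕ × ℕ) := l.zip l.tail

@[simp] lemma pairs_nil : pairs [] = [] := rfl
@[simp] lemma pairs_single (a : ℕ) : pairs [a] = [] := rfl
lemma pairs_cons_cons (a b : ℕ) (t : List ℕ) :
    pairs (a :: b :: t) = (a, b) :: pairs (b :: t) := rfl

lemma mem_pairs_getD : ∀ (l : List ℕ) (i : ℕ), i + 1 < l.length →
    (l.getD i 0, l.getD (i + 1) 0) ∈ pairs l := by
  intro l
  induction l with
  | nil => intro i hi; simp at hi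
  | cons a t ih =>
    intro i hi
    cases t with
    | nil => simp at hi
    | cons b t' =>
      cases i with
      | zero => rw [pairs_cons_cons]; simp
      | succ j =>
        rw [pairs_cons_cons]
        have := ih j (by simpa using hi)
        simp only [List.getD_cons_succ]
        exact List.mem_cons_of_mem _ this

lemma pairs_iMed (m : ℕ) : ∀ l, pairs (iMed m l) =
    (pairs l).flatMap (fun p => if p.1 + p.2 = m then [(p.1, m), (m, p.2)] else [(p.1, p.2)]) := by
  intro l
  induction l using iMed.induct with
  | case1 => simp
  | case2 a => simp
  | case3 a b t ih =>
    obtain ⟨r, hr⟩ := iMed_head m b t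
    rw [iMed_cons_cons, pairs_cons_cons, List.flatMap_cons, hr]
    by_cases hab : a + b = m
    · rw [if_pos hab]
      simp only [hab, if_pos rfl]
      rw [show ([a, m] : List ℕ) ++ (b :: r) = a :: m :: b :: r from rfl]
      rw [pairs_cons_cons, pairs_cons_cons, ← hr, ih]
      simp
    · rw [if_neg hab]
      simp only [hab, if_neg]
      rw [show ([a] : List ℕ) ++ (b :: r) = a :: b :: r from rfl]
      rw [pairs_cons_cons, ← hr, ih]
      simp [hab]

lemma cnt_eq_countP (m : ℕ) : ∀ l, cnt m l = (pairs l).countP (fun p => p.1 + p.2 = m) := by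
  intro l
  induction l using iMed.induct with
  | case1 => simp
  | case2 a => simp
  | case3 a b t ih =>
    rw [cnt_cons_cons, pairs_cons_cons, List.countP_cons, ih]
    simp only [decide_eq_true_eq]
    omega
lemma Ksum_iMed (m : ℕ) : ∀ l, (∀ x ∈ l, 0 < x) →
    Ksum (iMed m l) = Ksum l + 3 * cnt m l - fHit m l - lHit m l := by
  intro l
  induction l using iMed.induct with
  | case1 => intro _; simp [fHit, lHit]
  | case2 a => intro _; simp [fHit, lHit]
  | case3 a b t ih =>
    intro hpos
    have ha : 0 < a := hpos a (by simp)
    have hb : 0 < b := hpos b (by simp)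
    have hbR : (b : ℝ) ≠ 0 := Nat.cast_ne_zero.mpr hb.ne'
    cases t with
    | nil =>
      rw [iMed_cons_cons]
      by_cases hab : a + b = m
      · rw [if_pos hab]
        simp only [iMed_single]
        show Ksum [a, m, b] = _
        rw [Ksum_cons3]
        have hm : (m : ℝ) ≠ 0 := by
          have : 0 < m := by omega
          exact Nat.cast_ne_zero.mpr this.ne'
        have h1 : ((a : ℝ) + b) / m = 1 := by
          rw [div_eq_one_iff_eq hm]; exact_mod_cast hab
        rw [h1]
        simp [cnt_cons_cons, fHit, lHit, hab]
        norm_num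
      · rw [if_neg hab]
        simp only [iMed_single]
        show Ksum [a, b] = _
        simp [cnt_cons_cons, fHit, lHit, hab]
    | cons c t' =>
      have hc : 0 < c := hpos c (by simp)
      have ih2 := ih (fun x hx => hpos x (List.mem_cons_of_mem _ hx))
      obtain ⟨r, hr⟩ := iMed_two m b c t'
      have hlhit : lHit m (a :: b :: c :: t') = lHit m (b :: c :: t') := lHit_cons3 m a b c t'
      have hfhit : fHit m (a :: b :: c :: t') = if a + b = m then 1 else 0 := rfl
      have hfhit' : fHit m (b :: c :: t') = if b + c = m then 1 else 0 := rfl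
      rw [cnt_cons_cons m b c t', hfhit'] at ih2
      rw [iMed_cons_cons, hr, hlhit, hfhit, cnt_cons_cons m a b (c :: t'),
        cnt_cons_cons m b c t']
      by_cases hab : a + b = m
      · rw [if_pos hab]
        show Ksum (a :: m :: b :: (if b + c = m then m else c) :: r) = _
        rw [Ksum_cons3, Ksum_cons3, ← hr, ih2, Ksum_cons3]
        have hm : (m : ℝ) ≠ 0 := by
          have : 0 < m := by omega
          exact Nat.cast_ne_zero.mpr this.ne'
        have h1 : ((a : ℝ) + b) / m = 1 := by
          rw [div_eq_one_iff_eq hm]; exact_mod_cast hab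
        rw [h1]
        by_cases hbc : b + c = m
        · have h2 : ((m : ℝ) + m) / b = ((a : ℝ) + c) / b + 2 := by
            have he : m + m = (a + c) + 2 * b := by omega
            have he' : ((m : ℝ) + m) = ((a : ℝ) + c) + 2 * b := by exact_mod_cast he
            rw [he']
            field_simp
          simp only [if_pos hab, if_pos hbc, h2]
          push_cast
          ring
        · have h2 : ((m : ℝ) + c) / b = ((a : ℝ) + c) / b + 1 := by
            have he : m + c = (a + c) + b := by omega
            have he' : ((m : ℝ) + c) = ((a : ℝ) + c) + b := by exact_mod_cast he
            rw [he']
            field_simp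
          simp only [if_pos hab, if_neg hbc, h2]
          push_cast
          ring
      · rw [if_neg hab]
        show Ksum (a :: b :: (if b + c = m then m else c) :: r) = _
        rw [Ksum_cons3, ← hr, ih2, Ksum_cons3]
        by_cases hbc : b + c = m
        · have h2 : ((a : ℝ) + m) / b = ((a : ℝ) + c) / b + 1 := by
            have he : a + m = (a + c) + b := by omega
            have he' : ((a : ℝ) + m) = ((a : ℝ) + c) + b := by exact_mod_cast he
            rw [he']
            field_simp
          simp only [if_neg hab, if_pos hbc, h2]
          push_cast
          ring
        · simp only [if_neg hab, if_neg hbc]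
          push_cast
          ring

lemma Ksum_eq_sum : ∀ l : List ℕ, Ksum l =
    ∑ i ∈ Finset.range (l.length - 2),
      ((l.getD i 0 : ℝ) + (l.getD (i + 2) 0 : ℝ)) / (l.getD (i + 1) 0 : ℝ) := by
  intro l
  induction l using Ksum.induct with
  | case1 => simp
  | case2 a => simp
  | case3 a b => simp
  | case4 a b c t ih =>
    rw [Ksum_cons3, ih]
    have hlen : (a :: b :: c :: t).length - 2 = (t.length + 1) := by simp
    rw [hlen]
    rw [Finset.sum_range_succ']
    have hlen2 : (b :: c :: t).length - 2 = t.length := by simp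
    rw [hlen2]
    simp only [List.getD_cons_succ, List.getD_cons_zero]
    ring
lemma LL_pos : ∀ n, ∀ x ∈ LL n, 0 < x := by
  intro n
  induction n with
  | zero => intro x hx; simp [LL] at hx; omega
  | succ n ih =>
    intro x hx
    rw [show LL (n + 1) = iMed (n + 1) (LL n) from rfl] at hx
    rcases mem_iMed hx with h | h
    · exact ih x h
    · omega

lemma LL_one : LL 1 = [1, 1] := by
  show iMed 1 (LL 0) = [1, 1]
  rw [show LL 0 = [1, 1] from rfl, iMed_cons_cons]
  norm_num

lemma LL_start : ∀ n, 1 ≤ n → ∃ t, LL n = 1 :: n :: t := by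
  intro n
  induction n with
  | zero => omega
  | succ n ih =>
    intro _
    by_cases hn : 1 ≤ n
    · obtain ⟨t, ht⟩ := ih hn
      refine ⟨iMed (n + 1) (n :: t), ?_⟩
      rw [show LL (n + 1) = iMed (n + 1) (LL n) from rfl, ht, iMed_cons_cons,
        if_pos (by omega : 1 + n = n + 1)]
      rfl
    · have : n = 0 := by omega
      subst this
      exact ⟨[], LL_one⟩

lemma LL_end : ∀ n, 1 ≤ n → ∃ u, LL n = u ++ [n, 1] := by
  intro n
  induction n with
  | zero => omega
  | succ n ih =>
    intro _
    by_cases hn : 1 ≤ n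
    · obtain ⟨u, hu⟩ := ih hn
      refine ⟨iMed (n + 1) (u ++ [n]), ?_⟩
      rw [show LL (n + 1) = iMed (n + 1) (LL n) from rfl, hu, iMed_append,
        if_pos (by omega : n + 1 = n + 1)]
    · have : n = 0 := by omega
      subst this
      exact ⟨[], LL_one⟩

lemma fareyLen_one : fareyLen 1 = 1 := by simp [fareyLen]

lemma fareyLen_succ (n : ℕ) : fareyLen (n + 1) = fareyLen n + Nat.totient (n + 1) := by
  unfold fareyLen
  rw [Finset.sum_Icc_succ_top (by omega)]

lemma one_le_fareyLen (n : ℕ) (hn : 1 ≤ n) : 1 ≤ fareyLen n := by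
  unfold fareyLen
  calc 1 = Nat.totient 1 := by simp
  _ ≤ ∑ k ∈ Finset.Icc 1 n, Nat.totient k :=
    Finset.single_le_sum (fun i _ => Nat.zero_le _) (by simp [Finset.mem_Icc]; omega)

lemma pairs_LL : ∀ n, 1 ≤ n → (pairs (LL n)).Nodup ∧
    ∀ p : ℕ × ℕ, p ∈ pairs (LL n) ↔
      (0 < p.1 ∧ p.1 ≤ n ∧ 0 < p.2 ∧ p.2 ≤ n ∧ n < p.1 + p.2 ∧ Nat.Coprime p.1 p.2) := by
  intro n
  induction n with
  | zero => omega
  | succ n ih =>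
    intro _
    by_cases hn : 1 ≤ n
    case neg =>
      have : n = 0 := by omega
      subst this
      rw [LL_one]
      constructor
      · simp [pairs_cons_cons]
      · intro p
        rw [pairs_cons_cons]
        simp only [pairs_single, List.mem_singleton]
        constructor
        · rintro rfl; simp [Nat.Coprime]
        · rintro ⟨h1, h2, h3, h4, h5, h6⟩
          have : p.1 = 1 ∧ p.2 = 1 := by omega
          cases p; simp_all
    case pos =>
      obtain ⟨nodup, mem⟩ := ih hn
      have hbind := pairs_iMed (n + 1) (LL n)
      have hLL : LL (n + 1) = iMed (n + 1) (LL n) := rfl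
      set f : ℕ × ℕ → List (ℕ × ℕ) :=
        fun p => if p.1 + p.2 = n + 1 then [(p.1, n + 1), (n + 1, p.2)] else [(p.1, p.2)] with hf
      constructor
      · rw [hLL, hbind, List.nodup_flatMap]
        constructor
        · intro q hq
          obtain ⟨hq1, hq2, hq3, hq4, hq5, hq6⟩ := (mem q).mp hq
          by_cases h : q.1 + q.2 = n + 1
          · simp only [hf, if_pos h]
            simp
            omega
          · simp [hf, if_neg h]
        · have hdisj : ∀ q ∈ pairs (LL n), ∀ q' ∈ pairs (LL n), q ≠ q' →
              List.Disjoint (f q) (f q') := by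
            rintro ⟨a, b⟩ hq ⟨a', b'⟩ hq' hne ⟨x, y⟩ hp hp'
            obtain ⟨h1, h2, h3, h4, h5, h6⟩ := (mem (a, b)).mp hq
            obtain ⟨h1', h2', h3', h4', h5', h6'⟩ := (mem (a', b')).mp hq'
            simp only at h1 h2 h3 h4 h5 h1' h2' h3' h4' h5'
            by_cases e1 : a + b = n + 1 <;> by_cases e2 : a' + b' = n + 1
            · simp only [hf, e1, e2, ite_true, List.mem_cons, List.mem_singleton,
                List.not_mem_nil, or_false, Prod.mk.injEq] at hp hp'
              rcases hp with ⟨hh1, hh2⟩ | ⟨hh1, hh2⟩ <;>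
                rcases hp' with ⟨hh3, hh4⟩ | ⟨hh3, hh4⟩ <;>
                first
                  | omega
                  | (exact hne (by simp only [Prod.mk.injEq]; omega))
            · simp only [hf, e1, e2, ite_true, ite_false, List.mem_cons,
                List.mem_singleton, List.not_mem_nil, or_false, Prod.mk.injEq] at hp hp'
              rcases hp with ⟨hh1, hh2⟩ | ⟨hh1, hh2⟩ <;> obtain ⟨hh3, hh4⟩ := hp' <;> omega
            · simp only [hf, e1, e2, ite_true, ite_false, List.mem_cons,
                List.mem_singleton, List.not_mem_nil, or_false, Prod.mk.injEq] at hp hp'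
              obtain ⟨hh1, hh2⟩ := hp
              rcases hp' with ⟨hh3, hh4⟩ | ⟨hh3, hh4⟩ <;> omega
            · simp only [hf, e1, e2, ite_false, List.mem_singleton, Prod.mk.injEq] at hp hp'
              obtain ⟨hh1, hh2⟩ := hp
              obtain ⟨hh3, hh4⟩ := hp'
              exact hne (by simp only [Prod.mk.injEq]; omega)
          exact List.Pairwise.imp_of_mem
            (fun ha hb hne => hdisj _ ha _ hb hne) nodup
      · intro p
        obtain ⟨x, y⟩ := p
        rw [hLL, hbind, List.mem_flatMap]
        constructor
        · rintro ⟨⟨a, b⟩, hq, hpfq⟩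
          obtain ⟨h1, h2, h3, h4, h5, h6⟩ := (mem (a, b)).mp hq
          simp only at h1 h2 h3 h4 h5
          by_cases hs : a + b = n + 1
          · simp only [hf, hs, ite_true, List.mem_cons, List.mem_singleton,
              List.not_mem_nil, or_false, Prod.mk.injEq] at hpfq
            rcases hpfq with ⟨hx, hy⟩ | ⟨hx, hy⟩
            · refine ⟨by omega, by omega, by omega, by omega, by omega, ?_⟩
              show Nat.Coprime x y
              rw [hx, hy, ← hs]
              exact Nat.coprime_self_add_right.mpr h6
            · refine ⟨by omega, by omega, by omega, by omega, by omega, ?_⟩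
              show Nat.Coprime x y
              rw [hx, hy, ← hs]
              exact Nat.coprime_add_self_left.mpr h6
          · simp only [hf, hs, ite_false, List.mem_singleton, Prod.mk.injEq] at hpfq
            obtain ⟨hx, hy⟩ := hpfq
            refine ⟨by omega, by omega, by omega, by omega, by omega, ?_⟩
            show Nat.Coprime x y
            rw [hx, hy]
            exact h6
        · rintro ⟨h1, h2, h3, h4, h5, h6⟩
          simp only at h1 h2 h3 h4 h5 h6
          by_cases hy : y = n + 1
          · subst hy
            have hx : x ≠ n + 1 := by
              intro h
              subst h
              rw [Nat.Coprime, Nat.gcd_self] at h6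
              omega
            have h7 : Nat.Coprime x (n + 1 - x) := by
              have he : n + 1 = x + (n + 1 - x) := by omega
              rw [he] at h6
              exact Nat.coprime_self_add_right.mp h6
            refine ⟨(x, n + 1 - x), (mem _).mpr ⟨h1, by omega, by omega, by omega, by omega, h7⟩, ?_⟩
            simp [hf, show x + (n + 1 - x) = n + 1 by omega]
          · by_cases hx : x = n + 1
            · subst hx
              have h7 : Nat.Coprime (n + 1 - y) y := by
                have he : n + 1 = (n + 1 - y) + y := by omega
                rw [he] at h6
                exact Nat.coprime_add_self_left.mp h6
              refine ⟨(n + 1 - y, y), (mem _).mpr ⟨by omega, by omega, h3, by omega, by omega, h7⟩, ?_⟩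
              simp [hf, show (n + 1 - y) + y = n + 1 by omega]
            · refine ⟨(x, y), (mem _).mpr ⟨h1, by omega, h3, by omega, by omega, h6⟩, ?_⟩
              simp [hf, show ¬(x + y = n + 1) by omega]
lemma cnt_LL (n : ℕ) (hn : 1 ≤ n) : cnt (n + 1) (LL n) = Nat.totient (n + 1) := by
  obtain ⟨nodup, mem⟩ := pairs_LL n hn
  rw [cnt_eq_countP, List.countP_eq_length_filter]
  have hnd : ((pairs (LL n)).filter (fun p => p.1 + p.2 = n + 1)).Nodup := nodup.filter _
  rw [← List.toFinset_card_of_nodup hnd]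
  have himg : ((pairs (LL n)).filter (fun p => p.1 + p.2 = n + 1)).toFinset =
      (((Finset.range (n + 1)).filter ((n + 1).Coprime)).image (fun a => (a, n + 1 - a))) := by
    ext ⟨x, y⟩
    simp only [List.mem_toFinset, List.mem_filter, Finset.mem_image, Finset.mem_filter,
      Finset.mem_range, decide_eq_true_eq]
    constructor
    · rintro ⟨hp, hsum⟩
      obtain ⟨h1, h2, h3, h4, h5, h6⟩ := (mem (x, y)).mp hp
      simp only at h1 h2 h3 h4 h5
      have hsum' : x + y = n + 1 := hsum
      refine ⟨x, ⟨by omega, ?_⟩, by show (x, n + 1 - x) = (x, y); simp only [Prod.mk.injEq, true_and]; omega⟩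
      have : (x + y).Coprime x := Nat.coprime_self_add_left.mpr (Nat.Coprime.symm h6)
      rw [hsum'] at this
      exact this
    · rintro ⟨a, ⟨ha1, ha2⟩, ha3⟩
      have ha0 : 0 < a := by
        rcases Nat.eq_zero_or_pos a with h | h
        · subst h
          rw [Nat.Coprime, Nat.gcd_zero_right] at ha2
          omega
        · exact h
      simp only [Prod.mk.injEq] at ha3
      obtain ⟨hx, hy⟩ := ha3
      have hcop : Nat.Coprime a (n + 1 - a) := by
        have h7 := Nat.Coprime.symm ha2
        have he : n + 1 = a + (n + 1 - a) := by omega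
        rw [he] at h7
        exact Nat.coprime_self_add_right.mp h7
      constructor
      · apply (mem (x, y)).mpr
        refine ⟨by omega, by omega, by omega, by omega, by omega, ?_⟩
        show Nat.Coprime x y
        rw [← hx, ← hy]
        exact hcop
      · omega
  rw [himg, Finset.card_image_of_injective _ (fun a b h => by
    simpa using congrArg Prod.fst h)]
  exact (Nat.totient_eq_card_coprime (n + 1)).symm

lemma LL_length : ∀ n, 1 ≤ n → (LL n).length = fareyLen n + 1 := by
  intro n
  induction n with
  | zero => omega
  | succ n ih =>
    intro _
    by_cases hn : 1 ≤ n
    · rw [show LL (n + 1) = iMed (n + 1) (LL n) from rfl, length_iMed, ih hn, cnt_LL n hn,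
        fareyLen_succ]
      omega
    · have : n = 0 := by omega
      subst this
      rw [LL_one]
      simp [fareyLen_one]

lemma lHit_cons (m : ℕ) (w : List ℕ) (x y : ℕ) (hw : w ≠ []) :
    lHit m (x :: y :: w) = lHit m (y :: w) := by
  cases w with
  | nil => exact absurd rfl hw
  | cons z w' => exact lHit_cons3 m x y z w'

lemma lHit_append (m : ℕ) : ∀ (u : List ℕ) (a b : ℕ),
    lHit m (u ++ [a, b]) = if a + b = m then 1 else 0 := by
  intro u
  induction u with
  | nil => intro a b; simp
  | cons x u ih =>
    intro a b
    cases u with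
    | nil =>
      rw [show ([x] ++ [a, b] : List ℕ) = x :: a :: b :: [] from rfl, lHit_cons3]
      simp
    | cons y u' =>
      rw [show ((x :: y :: u') ++ [a, b] : List ℕ) = x :: y :: (u' ++ [a, b]) from rfl,
        lHit_cons m (u' ++ [a, b]) x y (by simp)]
      exact ih a b

lemma iMed_E (n : ℕ) (hn : 1 ≤ n) :
    iMed (n + 1) (LL n ++ [n]) = LL (n + 1) ++ [n + 1, n] := by
  obtain ⟨u, hu⟩ := LL_end n hn
  have h1 : LL n ++ [n] = (u ++ [n]) ++ [1, n] := by
    rw [hu]; simp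
  rw [h1, iMed_append, if_pos (by omega : 1 + n = n + 1)]
  have h2 : (u ++ [n]) ++ [1] = LL n := by rw [hu]; simp
  rw [h2]
  rfl

lemma div3_LL : ∀ n, 1 ≤ n → Div3 (LL n ++ [n]) := by
  intro n
  induction n with
  | zero => omega
  | succ n ih =>
    intro _
    by_cases hn : 1 ≤ n
    · have h1 := div3_iMed (n + 1) _ (ih hn)
      rw [iMed_E n hn] at h1
      apply div3_prefix n
      rw [List.append_assoc]
      exact h1
    · have : n = 0 := by omega
      subst this
      rw [LL_one]
      show Div3 [1, 1, 1]
      rw [Div3_cons3]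
      exact ⟨⟨2, rfl⟩, Div3_short _ (by simp)⟩

lemma Ksum_LL : ∀ n, 1 ≤ n → Ksum (LL n ++ [n]) = 3 * fareyLen n - 1 := by
  intro n
  induction n with
  | zero => omega
  | succ n ih =>
    intro _
    by_cases hn : 1 ≤ n
    case neg =>
      have : n = 0 := by omega
      subst this
      rw [LL_one]
      show Ksum [1, 1, 1] = _
      rw [Ksum_cons3, fareyLen_one]
      norm_num
    case pos =>
      have hpos : ∀ x ∈ LL n ++ [n], 0 < x := by
        intro x hx
        rcases List.mem_append.mp hx with h | h
        · exact LL_pos n x h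
        · simp at h; omega
      have hKI := Ksum_iMed (n + 1) (LL n ++ [n]) hpos
      rw [iMed_E n hn] at hKI
      -- compute cnt, fHit, lHit
      have hcnt : cnt (n + 1) (LL n ++ [n]) = cnt (n + 1) (LL n) + 1 := by
        obtain ⟨u, hu⟩ := LL_end n hn
        have h1 : LL n ++ [n] = (u ++ [n]) ++ [1, n] := by rw [hu]; simp
        have h2 : (u ++ [n]) ++ [1] = LL n := by rw [hu]; simp
        rw [h1, cnt_append, h2, if_pos (by omega : 1 + n = n + 1)]
      have hfH : fHit (n + 1) (LL n ++ [n]) = 1 := by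
        obtain ⟨t, ht⟩ := LL_start n hn
        rw [ht]
        show (if 1 + n = n + 1 then 1 else 0) = 1
        rw [if_pos (by omega)]
      have hlH : lHit (n + 1) (LL n ++ [n]) = 1 := by
        obtain ⟨u, hu⟩ := LL_end n hn
        have h1 : LL n ++ [n] = (u ++ [n]) ++ [1, n] := by rw [hu]; simp
        rw [h1, lHit_append, if_pos (by omega : 1 + n = n + 1)]
      rw [hcnt, hfH, hlH, cnt_LL n hn, ih hn] at hKI
      -- Ksum (LL (n+1) ++ [n+1, n]) = Ksum (LL (n+1) ++ [n+1]) + 1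
      obtain ⟨w, hw⟩ := LL_end (n + 1) (by omega)
      have h3 : LL (n + 1) ++ [n + 1, n] = (w ++ [n + 1]) ++ [1, n + 1, n] := by
        rw [hw]; simp
      have h4 : (w ++ [n + 1]) ++ [1, n + 1] = LL (n + 1) ++ [n + 1] := by
        rw [hw]; simp
      rw [h3, Ksum_append, h4] at hKI
      have h5 : ((1 : ℕ) : ℝ) + (n : ℝ) ≠ 0 := by
        push_cast
        positivity
      have h6 : (((1 : ℕ) : ℝ) + (n : ℝ)) / ((n + 1 : ℕ) : ℝ) = 1 := by
        rw [div_eq_one_iff_eq (by push_cast; positivity)]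
        push_cast
        ring
      rw [h6] at hKI
      rw [fareyLen_succ]
      push_cast at hKI ⊢
      linarith

lemma floor_helper (nn a b c : ℕ) (hb : 0 < b) (hdvd : b ∣ a + c) (hc : c ≤ nn)
    (hbc : nn < b + c) :
    ⌊((nn : ℝ) + a) / b⌋ = (((a + c) / b : ℕ) : ℤ) := by
  obtain ⟨k, hk⟩ := hdvd
  have hq : (a + c) / b = k := by rw [hk, Nat.mul_div_cancel_left _ hb]
  rw [hq]
  have hbR : (0 : ℝ) < b := by exact_mod_cast hb
  rw [Int.floor_eq_iff]
  have h1 : k * b = a + c := by rw [Nat.mul_comm]; omega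
  constructor
  · rw [le_div_iff₀ hbR]
    have hnat : k * b ≤ nn + a := by omega
    exact_mod_cast hnat
  · rw [div_lt_iff₀ hbR]
    have h2 : (k + 1) * b = a + c + b := by rw [Nat.add_mul]; omega
    have hnat : nn + a < (k + 1) * b := by omega
    exact_mod_cast hnat

lemma arg_helper (n a b : ℕ) (hn : 0 < n) (hb : 0 < b) :
    (1 + (a : ℝ) / n) / ((b : ℝ) / n) = ((n : ℝ) + a) / b := by
  have hnR : (n : ℝ) ≠ 0 := by positivity
  have hbR : (b : ℝ) ≠ 0 := by positivity
  field_simp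

lemma getD_cast_pos {l : List ℕ} {i : ℕ} (h : 0 < l.getD i 0) : ((l.getD i 0 : ℕ) : ℝ) ≠ 0 := by
  exact_mod_cast h.ne'

theorem sum_khat_periodic_orbit (n : ℕ) (hn : 1 ≤ n) :
    ∑ i ∈ Finset.range (fareyLen n), (khat (bczT^[i] (1 / (n : ℝ), 1)) - 3) = -1 := by
  have hA1 : 1 ≤ fareyLen n := one_le_fareyLen n hn
  set A := fareyLen n with hA
  set E : List ℕ := LL n ++ [n] with hEdef
  set q : ℕ → ℕ := fun i => E.getD i 0 with hqdef
  have hlenL : (LL n).length = A + 1 := LL_length n hn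
  have hlenE : E.length = A + 2 := by rw [hEdef]; simp [hlenL]
  have hagree : ∀ j, j < A + 1 → q j = (LL n).getD j 0 := by
    intro j hj
    rw [hqdef]
    simp only
    rw [hEdef]
    exact List.getD_append _ _ _ j (by omega)
  obtain ⟨t, ht⟩ := LL_start n hn
  have hq0 : q 0 = 1 := by
    rw [hqdef]; simp only; rw [hEdef, ht]; simp
  have hq1 : q 1 = n := by
    rw [hqdef]; simp only; rw [hEdef, ht]; simp
  obtain ⟨u, hu⟩ := LL_end n hn
  have hulen : u.length = A - 1 := by
    have h := hlenL
    rw [hu] at h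
    simp at h
    omega
  have hE3 : E = u ++ [n, 1, n] := by rw [hEdef, hu]; simp
  have hqval : ∀ j : ℕ, j < 3 → q (u.length + j) = [n, 1, n].getD j 0 := by
    intro j hj
    rw [hqdef]
    simp only
    rw [hE3, List.getD_append_right _ _ _ _ (by omega)]
    congr 1
    omega
  have hqAm : q (A - 1) = n := by
    have := hqval 0 (by omega)
    simpa [hulen] using this
  have hqA : q A = 1 := by
    have := hqval 1 (by omega)
    rw [show u.length + 1 = A by omega] at this
    simpa using this
  have hqA1 : q (A + 1) = n := by
    have := hqval 2 (by omega)
    rw [show u.length + 2 = A + 1 by omega] at this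
    simpa using this
  have hpair : ∀ i, i ≤ A →
      0 < q i ∧ q i ≤ n ∧ 0 < q (i + 1) ∧ q (i + 1) ≤ n ∧ n < q i + q (i + 1) := by
    intro i hi
    by_cases hiA : i < A
    · have h1 := hagree i (by omega)
      have h2 := hagree (i + 1) (by omega)
      have hm := mem_pairs_getD (LL n) i (by omega)
      obtain ⟨c1, c2, c3, c4, c5, _⟩ := ((pairs_LL n hn).2 _).mp hm
      rw [h1, h2]
      exact ⟨c1, c2, c3, c4, c5⟩
    · have hieq : i = A := by omega
      subst hieq
      rw [hqA, hqA1]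
      exact ⟨one_pos, hn, by omega, le_rfl, by omega⟩
  have hdvd : ∀ i, i < A → q (i + 1) ∣ q i + q (i + 2) := by
    intro i hi
    have := div3_getD E (div3_LL n hn) i (by omega)
    exact this
  have hnR : (0 : ℝ) < n := by exact_mod_cast hn
  have hnne : (n : ℝ) ≠ 0 := ne_of_gt hnR
  have hfloor1 : ∀ i, i < A →
      ⌊(1 + ((q i : ℝ) / n)) / ((q (i + 1) : ℝ) / n)⌋ =
        (((q i + q (i + 2)) / q (i + 1) : ℕ) : ℤ) := by
    intro i hi
    have hp := hpair i (le_of_lt hi)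
    have hp2 := hpair (i + 1) (by omega)
    rw [arg_helper n (q i) (q (i + 1)) (by omega) hp.2.2.1]
    exact floor_helper n (q i) (q (i + 1)) (q (i + 2)) hp.2.2.1 (hdvd i hi)
      hp2.2.2.2.1 hp2.2.2.2.2
  have hfloor2 : ∀ i, i < A →
      ⌊(1 + ((q (i + 1) : ℝ) / n)) / ((q i : ℝ) / n)⌋ =
        (((q (i + 1) + (if i = 0 then n else q (i - 1))) / q i : ℕ) : ℤ) := by
    intro i hi
    have hp := hpair i (le_of_lt hi)
    rw [arg_helper n (q (i + 1)) (q i) (by omega) hp.1]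
    by_cases hi0 : i = 0
    · subst hi0
      simp only [if_pos rfl]
      refine floor_helper n (q 1) (q 0) n hp.1 ?_ le_rfl ?_
      · rw [hq0]; exact one_dvd _
      · rw [hq0]; omega
    · simp only [if_neg hi0]
      obtain ⟨j, rfl⟩ : ∃ j, i = j + 1 := ⟨i - 1, by omega⟩
      simp only [Nat.add_sub_cancel]
      have hpj := hpair j (by omega)
      have hdj := hdvd j (by omega)
      refine floor_helper n (q (j + 2)) (q (j + 1)) (q j) hp.1 ?_ hpj.2.1 (by omega)
      rw [Nat.add_comm (q (j + 2)) (q j)]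
      exact hdj
  have horb : ∀ i, i < A → bczT^[i] ((1 : ℝ) / n, 1) = ((q i : ℝ) / n, (q (i + 1) : ℝ) / n) := by
    intro i
    induction i with
    | zero =>
      intro _
      simp only [Function.iterate_zero, id_eq]
      rw [hq0, hq1]
      norm_num
      rw [div_self hnne]
    | succ j ih =>
      intro hj
      have hj' : j < A := by omega
      rw [Function.iterate_succ_apply', ih hj']
      show ((q (j + 1) : ℝ) / n,
        (⌊(1 + (q j : ℝ) / n) / ((q (j + 1) : ℝ) / n)⌋ : ℝ) * ((q (j + 1) : ℝ) / n)
          - (q j : ℝ) / n) = _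
      rw [Prod.mk.injEq]
      refine ⟨rfl, ?_⟩
      have hDb : (q j + q (j + 2)) / q (j + 1) * q (j + 1) = q j + q (j + 2) :=
        Nat.div_mul_cancel (hdvd j hj')
      have hcast : (((q j + q (j + 2)) / q (j + 1) : ℕ) : ℝ) * (q (j + 1) : ℝ)
          = (q j : ℝ) + q (j + 2) := by exact_mod_cast hDb
      rw [hfloor1 j hj', Int.cast_natCast, ← mul_div_assoc, hcast, div_sub_div_same]
      ring_nf
  have hkh : ∀ i ∈ Finset.range A, khat (bczT^[i] ((1 : ℝ) / n, 1)) - 3 =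
      (((q i + q (i + 2)) / q (i + 1) : ℕ) : ℝ) / 2 +
      (((q (i + 1) + (if i = 0 then n else q (i - 1))) / q i : ℕ) : ℝ) / 2 - 3 := by
    intro i hi
    rw [Finset.mem_range] at hi
    rw [horb i hi]
    show ((⌊(1 + (q i : ℝ) / n) / ((q (i + 1) : ℝ) / n)⌋ : ℝ) +
      (⌊(1 + (q (i + 1) : ℝ) / n) / ((q i : ℝ) / n)⌋ : ℝ)) / 2 - 3 = _
    rw [hfloor1 i hi, hfloor2 i hi]
    simp only [Int.cast_natCast]
    ring
  rw [Finset.sum_congr rfl hkh]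
  have hS1 : ∑ i ∈ Finset.range A, (((q i + q (i + 2)) / q (i + 1) : ℕ) : ℝ)
      = 3 * A - 1 := by
    have hK := Ksum_LL n hn
    rw [Ksum_eq_sum] at hK
    rw [← hEdef] at hK
    rw [hlenE] at hK
    rw [show A + 2 - 2 = A from rfl] at hK
    rw [← hK]
    apply Finset.sum_congr rfl
    intro i hi
    rw [Finset.mem_range] at hi
    have hp2 := hpair (i + 1) (by omega)
    rw [Nat.cast_div (hdvd i hi) (by exact_mod_cast hp2.1.ne')]
    push_cast
    rfl
  have hS2 : ∑ i ∈ Finset.range A,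
      (((q (i + 1) + (if i = 0 then n else q (i - 1))) / q i : ℕ) : ℝ)
      = ∑ i ∈ Finset.range A, (((q i + q (i + 2)) / q (i + 1) : ℕ) : ℝ) := by
    rw [show A = (A - 1) + 1 by omega, Finset.sum_range_succ', Finset.sum_range_succ]
    have hB0 : (q (0 + 1) + (if (0 : ℕ) = 0 then n else q (0 - 1))) / q 0 = n + n := by
      rw [if_pos rfl, hq0, hq1, Nat.div_one]
    have hDlast : (q (A - 1) + q (A - 1 + 2)) / q (A - 1 + 1) = n + n := by
      rw [show A - 1 + 2 = A + 1 by omega, show A - 1 + 1 = A by omega, hqAm, hqA1, hqA,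
        Nat.div_one]
    rw [hB0, hDlast]
    have hmid : ∀ i, (q (i + 1 + 1) + (if i + 1 = 0 then n else q (i + 1 - 1))) / q (i + 1)
        = (q i + q (i + 2)) / q (i + 1) := by
      intro i
      rw [if_neg (by omega), Nat.add_sub_cancel, Nat.add_comm (q (i + 1 + 1))]
    simp only [hmid]
  rw [Finset.sum_sub_distrib, Finset.sum_add_distrib, ← Finset.sum_div, ← Finset.sum_div,
    hS2, hS1]
  rw [Finset.sum_const, Finset.card_range]
  have : 1 ≤ (A : ℝ) := by exact_mod_cast hA1
  push_cast
  ring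
end

section
/- (Reset control.) For every excursion ((a_i,b_i))_{i=0}^{s} of the BCZ map, a_s/a_0 + a_0/a_s − 4 < Σ_{m=0}^{s−1} (k̂(a_m,b_m) − 3) < a_s/a_0 + a_0/a_s − 2. -/
/-- Key identity: for a positive sequence with integer three-term ratios and the
excursion property, the sum of `x + 1/x` of consecutive ratios telescopes. -/
lemma key_sum : ∀ s : ℕ, ∀ a : ℕ → ℝ, 1 ≤ s →
    (∀ i, i ≤ s → 0 < a i) →
    (∀ n, n + 1 < s → ∃ K : ℤ, a n + a (n+2) = (K : ℝ) * a (n+1)) →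
    (∀ i, 0 < i → i < s → a 0 < a i ∧ a s < a i) →
    ∑ m ∈ Finset.range s, (a (m+1) / a m + a m / a (m+1)) =
      a s / a 0 + a 0 / a s + 3 * ((s : ℝ) - 1) := by
  intro s
  induction s using Nat.strong_induction_on with
  | _ s IH =>
  intro a hs hpos hrec hexc
  rcases eq_or_lt_of_le hs with h1 | h2
  · -- s = 1
    subst h1
    simp [Finset.sum_range_one]
  · -- s ≥ 2
    obtain ⟨t, rfl⟩ : ∃ t, s = t + 2 := ⟨s - 2, by omega⟩
    -- find a mediant point
    have hex : ∃ n, n + 1 < t + 2 ∧ a n + a (n+2) = a (n+1) := by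
      by_contra hc
      push_neg at hc
      have hstep : ∀ n, n + 1 < t + 2 → a (n+1) - a n ≤ a (n+2) - a (n+1) := by
        intro n hn
        obtain ⟨K, hK⟩ := hrec n hn
        have hp1 : 0 < a n := hpos n (by omega)
        have hp2 : 0 < a (n+1) := hpos (n+1) (by omega)
        have hp3 : 0 < a (n+2) := hpos (n+2) (by omega)
        have hKpos : 0 < (K : ℝ) := by
          by_contra hK0
          push_neg at hK0
          nlinarith
        have hK1 : 1 ≤ K := by
          have : (0:ℤ) < K := by exact_mod_cast hKpos
          omega
        have hKne1 : K ≠ 1 := by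
          intro hKe
          apply hc n hn
          rw [hK, hKe]; push_cast; ring
        have hK2 : (2 : ℝ) ≤ (K : ℝ) := by
          have : 2 ≤ K := by omega
          exact_mod_cast this
        nlinarith
      have hmono : ∀ n, n + 1 ≤ t + 2 → a 1 - a 0 ≤ a (n+1) - a n := by
        intro n
        induction n with
        | zero => intro _; simp
        | succ k ih =>
          intro hk
          exact le_trans (ih (by omega)) (hstep k (by omega))
      have h10 : a 0 < a 1 := (hexc 1 one_pos (by omega)).1
      have hlast : a (t+2) < a (t+1) := (hexc (t+1) (by omega) (by omega)).2
      have := hmono (t+1) (by omega)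
      linarith
    obtain ⟨n, hn, hmid⟩ := hex
    set b : ℕ → ℝ := fun i => if i ≤ n then a i else a (i+1) with hb
    have hb_lo : ∀ i, i ≤ n → b i = a i := by intro i hi; simp [hb, hi]
    have hb_hi : ∀ i, n < i → b i = a (i+1) := by
      intro i hi; simp [hb, Nat.not_le.mpr hi]
    have hIH := IH (t+1) (by omega) b (by omega)
      (by
        intro i hi
        by_cases hc : i ≤ n
        · rw [hb_lo i hc]; exact hpos i (by omega)
        · rw [hb_hi i (by omega)]; exact hpos (i+1) (by omega))
      (by
        intro j hj
        rcases lt_trichotomy (j+1) n with hcase | hcase | hcase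
        · -- all indices ≤ n
          obtain ⟨K, hK⟩ := hrec j (by omega)
          exact ⟨K, by rw [hb_lo j (by omega), hb_lo (j+1) (by omega),
            hb_lo (j+2) (by omega), hK]⟩
        · -- j+1 = n : b j = a j, b (j+1) = a n, b (j+2) = a (n+2)
          obtain ⟨K, hK⟩ := hrec j (by omega)
          refine ⟨K - 1, ?_⟩
          rw [hb_lo j (by omega), hb_lo (j+1) (by omega), hb_hi (j+2) (by omega)]
          have e1 : j + 2 + 1 = n + 2 := by omega
          have e2 : j + 2 = n + 1 := by omega
          rw [e1]
          have : a (n+2) = a (n+1) - a n := by linarith [hmid]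
          rw [this]
          have e3 : j + 1 = n := by omega
          rw [e3] at hK
          have e4 : j + 2 = n + 1 := by omega
          rw [e4] at hK
          rw [e3]
          push_cast
          linarith [hK]
        · -- j+1 > n
          rcases eq_or_lt_of_le (Nat.succ_le_of_lt hcase) with hcase2 | hcase2
          · -- n + 1 = j + 1, i.e. j = n : b j = a n, b (j+1) = a (n+2), b (j+2) = a (n+3)
            have ej : j = n := by omega
            subst ej
            obtain ⟨K, hK⟩ := hrec (j+1) (by omega)
            refine ⟨K - 1, ?_⟩
            rw [hb_lo j (by omega), hb_hi (j+1) (by omega), hb_hi (j+2) (by omega)]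
            have : a j = a (j+1) - a (j+2) := by linarith [hmid]
            rw [this]
            push_cast
            have e1 : j + 1 + 2 = j + 2 + 1 := by omega
            rw [e1] at hK
            nlinarith [hK]
          · -- n < j
            obtain ⟨K, hK⟩ := hrec (j+1) (by omega)
            refine ⟨K, ?_⟩
            rw [hb_hi j (by omega), hb_hi (j+1) (by omega), hb_hi (j+2) (by omega)]
            have e1 : j + 2 + 1 = j + 1 + 2 := by omega
            rw [e1, hK])
      (by
        intro i hi0 hit
        have hb0 : b 0 = a 0 := hb_lo 0 (by omega)
        have hbt : b (t+1) = a (t+2) := hb_hi (t+1) (by omega)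
        rw [hb0, hbt]
        by_cases hc : i ≤ n
        · rw [hb_lo i hc]; exact hexc i hi0 (by omega)
        · rw [hb_hi i (by omega)]; exact hexc (i+1) (by omega) (by omega))
    -- now the sum surgery
    have hb0 : b 0 = a 0 := hb_lo 0 (by omega)
    have hbt : b (t+1) = a (t+2) := hb_hi (t+1) (by omega)
    rw [hb0, hbt] at hIH
    have key3 : ∑ m ∈ Finset.range (t+2), (a (m+1) / a m + a m / a (m+1))
        = ∑ m ∈ Finset.range (t+1), (b (m+1) / b m + b m / b (m+1)) + 3 := by
      have splitA : ∑ m ∈ Finset.range (t+2), (a (m+1) / a m + a m / a (m+1))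
          = (∑ m ∈ Finset.range n, (a (m+1) / a m + a m / a (m+1)))
            + (a (n+1)/a n + a n/a (n+1)) + (a (n+1+1)/a (n+1) + a (n+1)/a (n+1+1))
            + ∑ m ∈ Finset.Ico (n+2) (t+2), (a (m+1) / a m + a m / a (m+1)) := by
        rw [Finset.range_eq_Ico,
          ← Finset.sum_Ico_consecutive _ (Nat.zero_le n) (show n ≤ t+2 by omega),
          Finset.sum_eq_sum_Ico_succ_bot (show n < t+2 by omega),
          Finset.sum_eq_sum_Ico_succ_bot (show n+1 < t+2 by omega),
          ← Finset.range_eq_Ico]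
        ring
      have splitB : ∑ m ∈ Finset.range (t+1), (b (m+1) / b m + b m / b (m+1))
          = (∑ m ∈ Finset.range n, (b (m+1) / b m + b m / b (m+1)))
            + (b (n+1)/b n + b n/b (n+1))
            + ∑ m ∈ Finset.Ico (n+1) (t+1), (b (m+1) / b m + b m / b (m+1)) := by
        rw [Finset.range_eq_Ico,
          ← Finset.sum_Ico_consecutive _ (Nat.zero_le n) (show n ≤ t+1 by omega),
          Finset.sum_eq_sum_Ico_succ_bot (show n < t+1 by omega),
          ← Finset.range_eq_Ico]
        ring
      have low : ∑ m ∈ Finset.range n, (b (m+1) / b m + b m / b (m+1))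
          = ∑ m ∈ Finset.range n, (a (m+1) / a m + a m / a (m+1)) := by
        refine Finset.sum_congr rfl fun i hi => ?_
        have hi' := Finset.mem_range.mp hi
        rw [hb_lo i (by omega), hb_lo (i+1) (by omega)]
      have tail : ∑ m ∈ Finset.Ico (n+1) (t+1), (b (m+1) / b m + b m / b (m+1))
          = ∑ m ∈ Finset.Ico (n+2) (t+2), (a (m+1) / a m + a m / a (m+1)) := by
        rw [Finset.sum_Ico_eq_sum_range, Finset.sum_Ico_eq_sum_range]
        have hlen : t + 1 - (n+1) = t + 2 - (n+2) := by omega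
        rw [hlen]
        refine Finset.sum_congr rfl fun j hj => ?_
        rw [hb_hi (n+1+j) (by omega), hb_hi (n+1+j+1) (by omega)]
        have e1 : n+1+j+1 = n+2+j := by omega
        rw [e1]
      have medi : (a (n+1)/a n + a n/a (n+1)) + (a (n+1+1)/a (n+1) + a (n+1)/a (n+1+1))
          = (b (n+1)/b n + b n/b (n+1)) + 3 := by
        rw [hb_lo n (by omega), hb_hi (n+1) (by omega)]
        have hx : 0 < a n := hpos n (by omega)
        have hz : 0 < a (n+2) := hpos (n+2) (by omega)
        have e0 : n+1+1 = n+2 := by omega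
        rw [e0]
        have e : a (n+1) = a n + a (n+2) := hmid.symm
        rw [e]
        have hxz : 0 < a n + a (n+2) := by linarith
        field_simp
        ring
      rw [splitA, splitB, low, tail]
      linarith [medi]
    rw [key3, hIH]
    push_cast
    ring

theorem reset_control (p : ℕ → ℝ × ℝ) (s : ℕ) (h : IsExcursion p s) :
    (p s).1 / (p 0).1 + (p 0).1 / (p s).1 - 4 <
        ∑ m ∈ Finset.range s, (khat (p m) - 3) ∧
      ∑ m ∈ Finset.range s, (khat (p m) - 3) <
        (p s).1 / (p 0).1 + (p 0).1 / (p s).1 - 2 := by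
  obtain ⟨hs1, hΩ, hT, hexc⟩ := h
  obtain ⟨t, rfl⟩ : ∃ t, s = t + 1 := ⟨s - 1, by omega⟩
  classical
  set Q : ℕ → ℝ := fun i => if i ≤ t + 1 then (p i).1 else (p (t+1)).2 with hQ
  have e12 : ∀ i : ℕ, i + 1 + 1 = i + 2 := fun i => by omega
  have hQdef : ∀ i, i ≤ t + 1 → Q i = (p i).1 := by
    intro i hi; simp only [hQ]; rw [if_pos hi]
  have hQtop : Q (t+2) = (p (t+1)).2 := by
    simp only [hQ]; rw [if_neg (by omega)]
  have hQ2 : ∀ m, m ≤ t + 1 → (p m).2 = Q (m+1) := by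
    intro m hm
    rcases eq_or_lt_of_le hm with he | hlt
    · rw [he, e12, hQtop]
    · rw [hQdef (m+1) (by omega), hT m hlt]
      simp [bczT]
  have hQpos : ∀ i, i ≤ t + 2 → 0 < Q i := by
    intro i hi
    rcases le_or_gt i (t+1) with hc | hc
    · rw [hQdef i hc]; exact (hΩ i hc).1
    · have : i = t + 2 := by omega
      rw [this, hQtop]; exact (hΩ (t+1) le_rfl).2.2.1
  have hQle1 : ∀ i, i ≤ t + 2 → Q i ≤ 1 := by
    intro i hi
    rcases le_or_gt i (t+1) with hc | hc
    · rw [hQdef i hc]; exact (hΩ i hc).2.1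
    · have : i = t + 2 := by omega
      rw [this, hQtop]; exact (hΩ (t+1) le_rfl).2.2.2.1
  have hQsum1 : ∀ i, i ≤ t + 1 → 1 < Q i + Q (i+1) := by
    intro i hi
    rw [hQdef i hi, ← hQ2 i hi]
    exact (hΩ i hi).2.2.2.2
  set k1 : ℕ → ℤ := fun m => ⌊(1 + Q m) / Q (m+1)⌋ with hk1def
  set k2 : ℕ → ℤ := fun m => ⌊(1 + Q (m+1)) / Q m⌋ with hk2def
  have hk1 : ∀ m, m ≤ t → ((k1 m : ℝ)) * Q (m+1) = Q m + Q (m+2) := by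
    intro m hm
    have h2 : (p (m+1)).2 = (bczT (p m)).2 := by rw [hT m (by omega)]
    rw [hQ2 (m+1) (by omega)] at h2
    simp only [bczT] at h2
    rw [hQ2 m (by omega), ← hQdef m (by omega)] at h2
    rw [e12] at h2
    simp only [hk1def]
    linarith [h2]
  have hkhat : ∀ m, m ≤ t → khat (p m) = ((k1 m : ℝ) + (k2 m : ℝ)) / 2 := by
    intro m hm
    simp only [khat, hk1def, hk2def]
    rw [hQ2 m (by omega), ← hQdef m (by omega)]
  have hk2k1 : ∀ m, m + 1 ≤ t → k2 (m+1) = k1 m := by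
    intro m hm
    have hkm := hk1 m (by omega)
    have hq1 : 0 < Q (m+1) := hQpos (m+1) (by omega)
    have hqm : Q m ≤ 1 := hQle1 m (by omega)
    have hsum : 1 < Q m + Q (m+1) := hQsum1 m (by omega)
    simp only [hk2def]
    rw [e12]
    rw [Int.floor_eq_iff]
    constructor
    · rw [le_div_iff₀ hq1]
      linarith
    · rw [div_lt_iff₀ hq1]
      push_cast
      nlinarith
  -- shift lemma
  have shift : ∀ f : ℕ → ℝ, ∑ m ∈ Finset.range (t+1), f (m+1)
      = ∑ m ∈ Finset.range (t+1), f m + f (t+1) - f 0 := by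
    intro f
    have h1 := Finset.sum_range_succ' f (t+1)
    have h2 := Finset.sum_range_succ f (t+1)
    rw [h2] at h1
    linarith
  -- sum of k2
  have hsum_k2 : ∑ m ∈ Finset.range (t+1), ((k2 m : ℝ))
      = ∑ m ∈ Finset.range (t+1), ((k1 m : ℝ)) - (k1 t : ℝ) + (k2 0 : ℝ) := by
    have h1 := Finset.sum_range_succ' (fun m => ((k2 m : ℝ))) t
    have h2 := Finset.sum_range_succ (fun m => ((k1 m : ℝ))) t
    have h3 : ∑ i ∈ Finset.range t, ((k2 (i+1) : ℝ)) = ∑ i ∈ Finset.range t, ((k1 i : ℝ)) := by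
      refine Finset.sum_congr rfl fun i hi => ?_
      rw [hk2k1 i (Finset.mem_range.mp hi)]
    rw [h1, h3, h2]
    ring
  -- k1 as ratio sum
  have hk1term : ∀ m, m ≤ t → ((k1 m : ℝ)) = Q m / Q (m+1) + Q (m+1+1) / Q (m+1) := by
    intro m hm
    have h1 : 0 < Q (m+1) := hQpos _ (by omega)
    rw [e12]
    rw [← add_div, eq_div_iff (ne_of_gt h1)]
    exact hk1 m hm
  have hsum_k1 : ∑ m ∈ Finset.range (t+1), ((k1 m : ℝ))
      = ∑ m ∈ Finset.range (t+1), (Q (m+1) / Q m + Q m / Q (m+1))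
        + Q (t+1+1) / Q (t+1) - Q 1 / Q 0 := by
    have e1 : ∑ m ∈ Finset.range (t+1), ((k1 m : ℝ))
        = ∑ m ∈ Finset.range (t+1), (Q m / Q (m+1) + Q (m+1+1) / Q (m+1)) := by
      refine Finset.sum_congr rfl fun m hm => hk1term m (by
        have := Finset.mem_range.mp hm; omega)
    rw [e1, Finset.sum_add_distrib]
    have e2 := shift (fun m => Q (m+1) / Q m)
    rw [e2, Finset.sum_add_distrib]
    ring
  -- key identity
  have hkey : ∑ m ∈ Finset.range (t+1), (Q (m+1) / Q m + Q m / Q (m+1))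
      = Q (t+1) / Q 0 + Q 0 / Q (t+1) + 3 * (((t+1 : ℕ) : ℝ) - 1) := by
    refine key_sum (t+1) Q (by omega) (fun i hi => hQpos i (by omega)) ?_ ?_
    · intro n hn
      exact ⟨k1 n, by linarith [hk1 n (by omega)]⟩
    · intro i h0 hi
      rw [hQdef 0 (by omega), hQdef i (by omega), hQdef (t+1) le_rfl]
      exact hexc i h0 hi
  -- total sum of khat
  have htotal : ∑ m ∈ Finset.range (t+1), (khat (p m) - 3)
      = (∑ m ∈ Finset.range (t+1), ((k1 m : ℝ))
        + ∑ m ∈ Finset.range (t+1), ((k2 m : ℝ))) / 2 - 3 * ((t+1 : ℕ) : ℝ) := by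
    have e1 : ∀ m ∈ Finset.range (t+1), khat (p m) - 3
        = ((k1 m : ℝ)) / 2 + ((k2 m : ℝ)) / 2 - 3 := by
      intro m hm
      rw [hkhat m (by have := Finset.mem_range.mp hm; omega)]
      ring
    rw [Finset.sum_congr rfl e1, Finset.sum_sub_distrib, Finset.sum_add_distrib,
      Finset.sum_const, Finset.card_range, ← Finset.sum_div, ← Finset.sum_div]
    push_cast
    ring
  -- combine into exact form
  have hq0 : 0 < Q 0 := hQpos 0 (by omega)
  have hq1 : 0 < Q 1 := hQpos 1 (by omega)
  have hqt : 0 < Q t := hQpos t (by omega)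
  have hqt1 : 0 < Q (t+1) := hQpos (t+1) (by omega)
  have hqt2 : 0 < Q (t+2) := hQpos (t+2) (by omega)
  have hQ1le : Q 1 ≤ 1 := hQle1 1 (by omega)
  have hQtle : Q t ≤ 1 := hQle1 t (by omega)
  have hQt2le : Q (t+2) ≤ 1 := hQle1 (t+2) (by omega)
  have hS0 : 1 < Q 0 + Q 1 := hQsum1 0 (by omega)
  have hSt : 1 < Q t + Q (t+1) := hQsum1 t (by omega)
  have hSt1 : 1 < Q (t+1) + Q (t+2) := hQsum1 (t+1) (by omega)
  have hkt : ((k1 t : ℝ)) * Q (t+1) = Q t + Q (t+2) := hk1 t le_rfl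
  -- floor bounds for k2 0
  have hf1 : ((k2 0 : ℝ)) ≤ (1 + Q 1) / Q 0 := by
    simp only [hk2def]
    exact Int.floor_le _
  have hf2 : (1 + Q 1) / Q 0 < ((k2 0 : ℝ)) + 1 := by
    simp only [hk2def]
    exact Int.lt_floor_add_one _
  have hf1' : ((k2 0 : ℝ)) * Q 0 ≤ 1 + Q 1 := (le_div_iff₀ hq0).mp hf1
  have hf2' : 1 + Q 1 < (((k2 0 : ℝ)) + 1) * Q 0 := (div_lt_iff₀ hq0).mp hf2
  -- exact value of the sum
  have hX : ∑ m ∈ Finset.range (t+1), (khat (p m) - 3)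
      = Q (t+1) / Q 0 + Q 0 / Q (t+1) - 3
        + (Q (t+1+1) / Q (t+1) - Q 1 / Q 0 + (((k2 0 : ℝ)) - ((k1 t : ℝ))) / 2) := by
    rw [htotal, hsum_k2, hsum_k1, hkey]
    push_cast
    ring
  rw [e12] at hX
  -- bounds on the error terms
  have hkval : ((k1 t : ℝ)) = (Q t + Q (t+2)) / Q (t+1) := by
    rw [eq_div_iff (ne_of_gt hqt1)]; exact hkt
  have hD1 : Q (t+2) / Q (t+1) - ((k1 t : ℝ)) / 2 = (Q (t+2) - Q t) / (2 * Q (t+1)) := by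
    rw [hkval]; field_simp; ring
  have hD1a : Q (t+2) / Q (t+1) - ((k1 t : ℝ)) / 2 < 1/2 := by
    rw [hD1, div_lt_iff₀ (by positivity)]
    linarith
  have hD1b : -(1/2) < Q (t+2) / Q (t+1) - ((k1 t : ℝ)) / 2 := by
    rw [hD1, lt_div_iff₀ (by positivity : (0:ℝ) < 2 * Q (t+1))]
    linarith
  have hD2 : ((k2 0 : ℝ)) / 2 - Q 1 / Q 0 = (((k2 0 : ℝ)) * Q 0 - 2 * Q 1) / (2 * Q 0) := by
    field_simp
  have hD2a : ((k2 0 : ℝ)) / 2 - Q 1 / Q 0 < 1/2 := by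
    rw [hD2, div_lt_iff₀ (by positivity)]
    linarith
  have hD2b : -(1/2) < ((k2 0 : ℝ)) / 2 - Q 1 / Q 0 := by
    rw [hD2, lt_div_iff₀ (by positivity : (0:ℝ) < 2 * Q 0)]
    nlinarith
  rw [← hQdef (t+1) le_rfl, ← hQdef 0 (by omega)]
  constructor
  · rw [hX]; linarith
  · rw [hX]; linarith
end

section
/- For every excursion ((a_i,b_i))_{i=0}^{s} of the BCZ map, |Σ_{m=0}^{s−1} (k̂(a_m,b_m) − 3)| < a_s/a_0 + a_0/a_s. -/
lemma propRight (t : ℕ) (c : ℕ → ℝ)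
    (hpos : ∀ i ≤ t, 0 < c i)
    (hend : ∀ i, 0 < i → i < t → c 0 < c i ∧ c t < c i)
    (hdiv : ∀ i, 0 < i → i < t → ∃ K : ℤ, 1 ≤ K ∧ c (i-1) + c (i+1) = K * c i)
    (m : ℕ) (hm0 : 0 < m) (hmt : m + 1 ≤ t)
    (hmax : ∀ i, 0 < i → i < t → c i ≤ c m)
    (heq : c (m+1) = c m) : False := by
  have hmlt : m < t := by omega
  have hcm : 0 < c m := hpos m (by omega)
  have key : ∀ d, m + 1 + d ≤ t → c (m + d) = c m ∧ c (m + d + 1) = c m := by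
    intro d
    induction d with
    | zero => intro _; exact ⟨rfl, heq⟩
    | succ d ih =>
      intro hle
      obtain ⟨h1, h2⟩ := ih (by omega)
      have e1 : m + (d + 1) = m + d + 1 := by omega
      rw [e1]
      refine ⟨h2, show c (m + d + 2) = c m from ?_⟩
      obtain ⟨K, hK1, hKe⟩ := hdiv (m + d + 1) (by omega) (by omega)
      have hi1 : m + d + 1 - 1 = m + d := by omega
      rw [hi1, h1, h2] at hKe
      have hval : c (m + d + 2) = ((K : ℝ) - 1) * c m := by
        have : m + d + 1 + 1 = m + d + 2 := by omega
        rw [this] at hKe; linarith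
      have hpos2 : 0 < c (m + d + 2) := hpos _ (by omega)
      have hK2 : (2 : ℝ) ≤ (K : ℝ) := by
        have : 2 ≤ K := by
          by_contra hcon
          have hK1' : K = 1 := by omega
          rw [hK1'] at hval; norm_num at hval; linarith
        exact_mod_cast this
      have hge : c m ≤ c (m + d + 2) := by rw [hval]; nlinarith
      rcases lt_or_eq_of_le (show m + d + 2 ≤ t by omega) with hlt | heqt
      · exact le_antisymm (hmax (m + d + 2) (by omega) hlt) hge
      · exfalso
        have := (hend m hm0 hmlt).2
        rw [heqt] at hge
        linarith
  obtain ⟨-, h2⟩ := key (t - (m+1)) (by omega)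
  have heqt : c t = c m := by
    have e : m + (t - (m+1)) + 1 = t := by omega
    rwa [e] at h2
  have := (hend m hm0 hmlt).2
  linarith

lemma mediantId (u w : ℝ) (hu : 0 < u) (hw : 0 < w) :
    ((u+w)/u + u/(u+w) - 3) + (w/(u+w) + (u+w)/w - 3) = w/u + u/w - 3 := by
  have h1 : u ≠ 0 := ne_of_gt hu
  have h2 : w ≠ 0 := ne_of_gt hw
  have h3 : u + w ≠ 0 := by positivity
  field_simp
  ring

lemma classB : ∀ t : ℕ, 1 ≤ t → ∀ c : ℕ → ℝ,
    (∀ i ≤ t, 0 < c i) →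
    (∀ i, 0 < i → i < t → c 0 < c i ∧ c t < c i) →
    (∀ i, 0 < i → i < t → ∃ K : ℤ, 1 ≤ K ∧ c (i-1) + c (i+1) = K * c i) →
    ∑ m ∈ Finset.range t, (c (m+1) / c m + c m / c (m+1) - 3)
      = c t / c 0 + c 0 / c t - 3 := by
  intro t
  induction t using Nat.strong_induction_on with
  | _ t IH =>
  intro ht c hpos hend hdiv
  rcases eq_or_lt_of_le ht with h1 | h2
  · -- base case t = 1
    rw [← h1]
    simp
  -- inductive step, 2 ≤ t
  classical
  have hne : (Finset.Ioo 0 t).Nonempty := ⟨1, by rw [Finset.mem_Ioo]; omega⟩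
  obtain ⟨m0, hm0mem, hm0max⟩ := Finset.exists_max_image (Finset.Ioo 0 t) c hne
  set A := (Finset.Ioo 0 t).filter (fun i => c i = c m0) with hA
  have hAne : A.Nonempty := ⟨m0, by simp [hA, hm0mem]⟩
  set m := A.min' hAne with hmdef
  have hmA : m ∈ A := Finset.min'_mem _ _
  have hmIoo : m ∈ Finset.Ioo 0 t := (Finset.mem_filter.1 hmA).1
  have hcm0 : c m = c m0 := (Finset.mem_filter.1 hmA).2
  obtain ⟨hm0', hmt⟩ := Finset.mem_Ioo.1 hmIoo
  clear_value m
  have hmax : ∀ i, 0 < i → i < t → c i ≤ c m := by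
    intro i hi1 hi2
    rw [hcm0]
    exact hm0max i (Finset.mem_Ioo.2 ⟨hi1, hi2⟩)
  have hcmpos : 0 < c m := hpos m (le_of_lt hmt)
  -- left neighbor strictly smaller
  have hleft : c (m-1) < c m := by
    rcases Nat.eq_or_lt_of_le (show 1 ≤ m from hm0') with h | h
    · have := (hend m hm0' hmt).1
      rw [show m - 1 = 0 by omega]
      exact this
    · have hle : c (m-1) ≤ c m := hmax (m-1) (by omega) (by omega)
      rcases lt_or_eq_of_le hle with h' | h'
      · exact h'
      · exfalso
        have hmem : m - 1 ∈ A := by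
          rw [hA, Finset.mem_filter, Finset.mem_Ioo]
          exact ⟨⟨by omega, by omega⟩, by rw [h', hcm0]⟩
        have := Finset.min'_le A (m-1) hmem
        omega
  -- right neighbor strictly smaller
  have hright : c (m+1) < c m := by
    rcases Nat.eq_or_lt_of_le (show m + 1 ≤ t by omega) with h | h
    · have := (hend m hm0' hmt).2
      rw [h]; exact this
    · have hle : c (m+1) ≤ c m := hmax (m+1) (by omega) h
      rcases lt_or_eq_of_le hle with h' | h'
      · exact h'
      · exact absurd h' (fun h'' => propRight t c hpos hend hdiv m hm0' (by omega) hmax h'')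
  -- mediant relation at m
  have hmed : c (m-1) + c (m+1) = c m := by
    obtain ⟨K, hK1, hKe⟩ := hdiv m hm0' hmt
    have hKlt : (K : ℝ) * c m < 2 * c m := by rw [← hKe]; linarith
    have : (K : ℝ) < 2 := lt_of_mul_lt_mul_right (by linarith [hKlt]) (le_of_lt hcmpos)
    have hK2 : K = 1 := by
      have : K < 2 := by exact_mod_cast this
      omega
    rw [hK2] at hKe
    push_cast at hKe
    linarith
  -- reduced sequence
  set c2 : ℕ → ℝ := fun i => if i < m then c i else c (i+1) with hc2
  have hc2lt : ∀ i, i < m → c2 i = c i := fun i hi => by simp [hc2, hi]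
  have hc2ge : ∀ i, m ≤ i → c2 i = c (i+1) := fun i hi => by
    simp [hc2, Nat.not_lt.2 hi]
  have hc20 : c2 0 = c 0 := hc2lt 0 hm0'
  have hc2t : c2 (t-1) = c t := by
    rw [hc2ge (t-1) (by omega), show t - 1 + 1 = t by omega]
  clear_value c2
  -- hypotheses for the reduced sequence
  have hpos2 : ∀ i ≤ t-1, 0 < c2 i := by
    intro i hi
    rcases lt_or_ge i m with h | h
    · rw [hc2lt i h]; exact hpos i (by omega)
    · rw [hc2ge i h]; exact hpos (i+1) (by omega)
  have hend2 : ∀ i, 0 < i → i < t-1 → c2 0 < c2 i ∧ c2 (t-1) < c2 i := by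
    intro i hi1 hi2
    rw [hc20, hc2t]
    rcases lt_or_ge i m with h | h
    · rw [hc2lt i h]; exact hend i hi1 (by omega)
    · rw [hc2ge i h]; exact hend (i+1) (by omega) (by omega)
  have hdiv2 : ∀ i, 0 < i → i < t-1 → ∃ K : ℤ, 1 ≤ K ∧ c2 (i-1) + c2 (i+1) = K * c2 i := by
    intro i hi1 hi2
    rcases lt_or_ge (i+1) m with h | h
    · -- all indices below m
      rw [hc2lt (i-1) (by omega), hc2lt i (by omega), hc2lt (i+1) h]
      exact hdiv i hi1 (by omega)
    · rcases eq_or_lt_of_le h with h' | h'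
      · -- i + 1 = m
        have hm2 : 2 ≤ m := by omega
        rw [hc2lt (i-1) (by omega), hc2lt i (by omega), hc2ge (i+1) (by omega)]
        obtain ⟨X, hX1, hXe⟩ := hdiv (m-1) (by omega) (by omega)
        rw [show m - 1 - 1 = m - 2 by omega, show m - 1 + 1 = m by omega] at hXe
        have hi' : i = m - 1 := by omega
        have hieq : i - 1 = m - 2 := by omega
        have hi1eq : i + 1 + 1 = m + 1 := by omega
        rw [hieq, hi1eq, hi']
        refine ⟨X - 1, ?_, ?_⟩
        · -- positivity forces X ≥ 2
          have hp1 : 0 < c (m-2) := hpos (m-2) (by omega)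
          have hp2 : 0 < c (m+1) := hpos (m+1) (by omega)
          have hp3 : 0 < c (m-1) := hpos (m-1) (by omega)
          have : 0 < ((X : ℝ) - 1) * c (m-1) := by nlinarith [hXe, hmed]
          have : (1 : ℝ) < (X : ℝ) := by nlinarith
          have : (1 : ℤ) < X := by exact_mod_cast this
          omega
        · push_cast
          nlinarith [hXe, hmed]
      · -- i ≥ m
        rcases eq_or_lt_of_le (show m ≤ i by omega) with h'' | h''
        · -- i = m
          rw [← h'']
          rw [hc2lt (m-1) (by omega), hc2ge m le_rfl, hc2ge (m+1) (by omega)]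
          obtain ⟨Y, hY1, hYe⟩ := hdiv (m+1) (by omega) (by omega)
          rw [show m + 1 - 1 = m by omega] at hYe
          refine ⟨Y - 1, ?_, ?_⟩
          · have hp1 : 0 < c (m-1) := hpos (m-1) (by omega)
            have hp2 : 0 < c (m+1+1) := hpos (m+1+1) (by omega)
            have hp3 : 0 < c (m+1) := hpos (m+1) (by omega)
            have : 0 < ((Y : ℝ) - 1) * c (m+1) := by nlinarith [hYe, hmed]
            have : (1 : ℝ) < (Y : ℝ) := by nlinarith
            have : (1 : ℤ) < Y := by exact_mod_cast this
            omega
          · push_cast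
            nlinarith [hYe, hmed]
        · -- i > m
          rw [hc2ge (i-1) (by omega), hc2ge i (by omega), hc2ge (i+1) (by omega)]
          obtain ⟨Z, hZ1, hZe⟩ := hdiv (i+1) (by omega) (by omega)
          rw [show i + 1 - 1 = i by omega] at hZe
          rw [show i - 1 + 1 = i by omega]
          exact ⟨Z, hZ1, hZe⟩
  have hIH := IH (t-1) (by omega) (by omega) c2 hpos2 hend2 hdiv2
  rw [hc20, hc2t] at hIH
  rw [← hIH]
  -- now prove the sums are equal
  set g : ℕ → ℝ := fun r => c (r+1) / c r + c r / c (r+1) - 3 with hg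
  set g2 : ℕ → ℝ := fun r => c2 (r+1) / c2 r + c2 r / c2 (r+1) - 3 with hg2
  show ∑ r ∈ Finset.range t, g r = ∑ r ∈ Finset.range (t-1), g2 r
  have A1 : ∑ r ∈ Finset.range t, g r
      = ∑ r ∈ Finset.range (m+1), g r + ∑ r ∈ Finset.Ico (m+1) t, g r :=
    (Finset.sum_range_add_sum_Ico g (show m+1 ≤ t by omega)).symm
  have A2 : ∑ r ∈ Finset.range (m+1), g r
      = ∑ r ∈ Finset.range (m-1), g r + g (m-1) + g m := by
    conv_lhs => rw [show m + 1 = m - 1 + 1 + 1 by omega]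
    rw [Finset.sum_range_succ, Finset.sum_range_succ, show m - 1 + 1 = m by omega]
  have B1 : ∑ r ∈ Finset.range (t-1), g2 r
      = ∑ r ∈ Finset.range m, g2 r + ∑ r ∈ Finset.Ico m (t-1), g2 r :=
    (Finset.sum_range_add_sum_Ico g2 (show m ≤ t-1 by omega)).symm
  have B2 : ∑ r ∈ Finset.range m, g2 r
      = ∑ r ∈ Finset.range (m-1), g2 r + g2 (m-1) := by
    conv_lhs => rw [show m = m - 1 + 1 by omega]
    rw [Finset.sum_range_succ]
  have A5 : ∑ r ∈ Finset.range (m-1), g r = ∑ r ∈ Finset.range (m-1), g2 r := by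
    refine Finset.sum_congr rfl fun r hr => ?_
    have hr' : r < m - 1 := Finset.mem_range.1 hr
    rw [hg, hg2]
    simp only
    rw [hc2lt r (by omega), hc2lt (r+1) (by omega)]
  have A3 : ∑ r ∈ Finset.Ico (m+1) t, g r = ∑ r ∈ Finset.Ico m (t-1), g2 r := by
    rw [Finset.sum_Ico_eq_sum_range, Finset.sum_Ico_eq_sum_range,
      show t - 1 - m = t - (m+1) by omega]
    refine Finset.sum_congr rfl fun r hr => ?_
    rw [hg, hg2]
    simp only
    rw [hc2ge (m + r) (by omega), hc2ge (m + r + 1) (by omega),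
      show m + 1 + r = m + r + 1 by omega, show m + r + 1 + 1 = m + r + 1 + 1 from rfl]
  have A4 : g (m-1) + g m = g2 (m-1) := by
    have hu : 0 < c (m-1) := hpos (m-1) (by omega)
    have hw : 0 < c (m+1) := hpos (m+1) (by omega)
    have hmm : c m = c (m-1) + c (m+1) := hmed.symm
    rw [hg, hg2]
    simp only
    rw [hc2ge (m-1+1) (by omega), hc2lt (m-1) (by omega),
      show m - 1 + 1 = m by omega, show m + 1 = m + 1 from rfl, hmm]
    exact mediantId (c (m-1)) (c (m+1)) hu hw
  rw [A1, A2, B1, B2, A5, A3, ← A4]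
  ring

lemma ebound (q : ℝ × ℝ) (hq : q ∈ fareyTriangle) :
    -(1/2 : ℝ) < q.2/q.1 - (⌊(1 + q.2)/q.1⌋ : ℝ)/2 ∧
      q.2/q.1 - (⌊(1 + q.2)/q.1⌋ : ℝ)/2 < 1/2 := by
  obtain ⟨ha, ha1, hb, hb1, hab⟩ := hq
  set a := q.1
  set b := q.2
  set K : ℤ := ⌊(1 + b)/a⌋ with hK
  have h1 : (K : ℝ) ≤ (1 + b)/a := Int.floor_le _
  have h2 : (1 + b)/a - 1 < (K : ℝ) := Int.sub_one_lt_floor _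
  have h1' : (K : ℝ) * a ≤ 1 + b := by
    rw [← le_div_iff₀ ha]
    exact h1
  have h2' : 1 + b < ((K : ℝ) + 1) * a := by
    have : (1 + b)/a < (K : ℝ) + 1 := by linarith
    rwa [div_lt_iff₀ ha] at this
  constructor
  · have hlt : ((K : ℝ) - 1)/2 * a < b := by nlinarith
    have := (lt_div_iff₀ ha).2 hlt
    linarith
  · have hlt : b < ((K : ℝ) + 1)/2 * a := by nlinarith
    have := (div_lt_iff₀ ha).2 hlt
    linarith

noncomputable def kk (p : ℕ → ℝ × ℝ) (m : ℕ) : ℤ := ⌊(1 + (p m).1) / (p m).2⌋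
noncomputable def KK (p : ℕ → ℝ × ℝ) (m : ℕ) : ℤ := ⌊(1 + (p m).2) / (p m).1⌋


theorem abs_reset_control (p : ℕ → ℝ × ℝ) (s : ℕ) (h : IsExcursion p s) :
    |∑ m ∈ Finset.range s, (khat (p m) - 3)| < (p s).1 / (p 0).1 + (p 0).1 / (p s).1 := by
  obtain ⟨hs, hΩ, hT, hmid⟩ := h
  have hΩ' : ∀ i ≤ s, 0 < (p i).1 ∧ (p i).1 ≤ 1 ∧ 0 < (p i).2 ∧ (p i).2 ≤ 1
      ∧ 1 < (p i).1 + (p i).2 := fun i hi => hΩ i hi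
  -- recurrences
  have hrec1 : ∀ m < s, (p (m+1)).1 = (p m).2 := fun m hm => by rw [hT m hm]; rfl
  have hrec2 : ∀ m < s, (p (m+1)).2 = (kk p m : ℝ) * (p m).2 - (p m).1 :=
    fun m hm => by rw [hT m hm]; rfl
  -- k ≥ 1
  have hk1 : ∀ i ≤ s, 1 ≤ kk p i := by
    intro i hi
    obtain ⟨ha, ha1, hb, hb1, hab⟩ := hΩ' i hi
    refine Int.le_floor.2 ?_
    rw [le_div_iff₀ hb]
    push_cast
    linarith
  -- backward identity
  have hback : ∀ m < s, KK p (m+1) = kk p m := by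
    intro m hm
    obtain ⟨ha, ha1, hb, hb1, hab⟩ := hΩ' m (le_of_lt hm)
    show ⌊(1 + (p (m+1)).2) / (p (m+1)).1⌋ = kk p m
    rw [hrec1 m hm, hrec2 m hm]
    have hb0 : (p m).2 ≠ 0 := ne_of_gt hb
    have hsplit : (1 + ((kk p m : ℝ) * (p m).2 - (p m).1)) / (p m).2
        = (kk p m : ℝ) + (1 - (p m).1) / (p m).2 := by
      field_simp
      ring
    rw [hsplit, Int.floor_intCast_add]
    have hfl : ⌊(1 - (p m).1) / (p m).2⌋ = 0 := by
      rw [Int.floor_eq_zero_iff]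
      constructor
      · exact div_nonneg (by linarith) (le_of_lt hb)
      · rw [div_lt_one hb]; linarith
    rw [hfl, add_zero]
  -- khat in terms of kk, KK
  have hkhat : ∀ m, khat (p m) = ((kk p m : ℝ) + (KK p m : ℝ)) / 2 := fun m => rfl
  -- class B for the first coordinates
  have hclassB := classB s hs (fun i => (p i).1)
    (fun i hi => (hΩ' i hi).1)
    hmid
    (by
      intro i hi1 hi2
      refine ⟨kk p (i-1), hk1 (i-1) (by omega), ?_⟩
      have e1 : (p (i+1)).1 = (p i).2 := hrec1 i hi2
      have e2 : (p i).2 = (kk p (i-1) : ℝ) * (p (i-1)).2 - (p (i-1)).1 := by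
        have := hrec2 (i-1) (by omega)
        rwa [show i - 1 + 1 = i by omega] at this
      have e3 : (p (i-1)).2 = (p i).1 := by
        have := hrec1 (i-1) (by omega)
        rw [show i - 1 + 1 = i by omega] at this
        exact this.symm
      rw [e1, e2, e3]
      ring)
  -- telescoping identity E1
  set y : ℕ → ℝ := fun i => (p i).2 / (p i).1 with hy
  have E1 : ∑ m ∈ Finset.range s, ((kk p m : ℝ) - 3)
      = ((p s).1 / (p 0).1 + (p 0).1 / (p s).1 - 3) + (y s - y 0) := by
    have hterm : ∀ m ∈ Finset.range s, ((kk p m : ℝ) - 3)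
        = ((p (m+1)).1 / (p m).1 + (p m).1 / (p (m+1)).1 - 3) + (y (m+1) - y m) := by
      intro m hm
      have hm' : m < s := Finset.mem_range.1 hm
      obtain ⟨ha, ha1, hb, hb1, hab⟩ := hΩ' m (le_of_lt hm')
      have hb0 : (p m).2 ≠ 0 := ne_of_gt hb
      have h1 : (p (m+1)).1 = (p m).2 := hrec1 m hm'
      have hym : y m = (p (m+1)).1 / (p m).1 := by rw [hy]; simp only; rw [h1]
      have hkeq : (kk p m : ℝ) = y (m+1) + (p m).1 / (p (m+1)).1 := by
        rw [hy]; simp only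
        rw [hrec2 m hm', h1]
        field_simp
        ring
      rw [hym, hkeq]
      ring
    rw [Finset.sum_congr rfl hterm, Finset.sum_add_distrib, Finset.sum_range_sub y s,
      hclassB]
  -- shift identity E2
  have E2 : ∑ m ∈ Finset.range s, ((KK p m : ℝ) - 3)
      = ∑ m ∈ Finset.range s, ((kk p m : ℝ) - 3)
        - ((kk p (s-1) : ℝ) - 3) + ((KK p 0 : ℝ) - 3) := by
    obtain ⟨s', rfl⟩ : ∃ s', s = s' + 1 := ⟨s-1, by omega⟩
    rw [Finset.sum_range_succ' (fun m => (KK p m : ℝ) - 3) s']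
    rw [Finset.sum_range_succ (fun m => (kk p m : ℝ) - 3) s']
    simp only [show s' + 1 - 1 = s' by omega]
    rw [(Finset.sum_congr rfl (fun i hi => by
      have hi' := Finset.mem_range.1 hi
      rw [hback i (by omega)]) :
        ∑ i ∈ Finset.range s', ((KK p (i+1) : ℝ) - 3)
          = ∑ i ∈ Finset.range s', ((kk p i : ℝ) - 3))]
    ring
  have E3 : kk p (s-1) = KK p s := by
    have := hback (s-1) (by omega)
    rw [show s - 1 + 1 = s by omega] at this
    exact this.symm
  have e0 : ∑ m ∈ Finset.range s, (khat (p m) - 3)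
      = (∑ m ∈ Finset.range s, ((kk p m : ℝ) - 3)
          + ∑ m ∈ Finset.range s, ((KK p m : ℝ) - 3)) / 2 := by
    rw [← Finset.sum_add_distrib, Finset.sum_div]
    refine Finset.sum_congr rfl fun m hm => ?_
    rw [hkhat m]
    ring
  -- e bounds
  obtain ⟨hl0, hu0⟩ := ebound (p 0) (hΩ 0 (by omega))
  obtain ⟨hls, hus⟩ := ebound (p s) (hΩ s le_rfl)
  -- F ≥ 2
  have hc0 : 0 < (p 0).1 := (hΩ' 0 (by omega)).1
  have hcs : 0 < (p s).1 := (hΩ' s le_rfl).1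
  have hF2 : 2 ≤ (p s).1 / (p 0).1 + (p 0).1 / (p s).1 := by
    rw [div_add_div _ _ (ne_of_gt hc0) (ne_of_gt hcs), le_div_iff₀ (by positivity)]
    nlinarith [sq_nonneg ((p s).1 - (p 0).1)]
  -- final assembly
  have hmain : ∑ m ∈ Finset.range s, (khat (p m) - 3)
      = ((p s).1 / (p 0).1 + (p 0).1 / (p s).1) - 3
        + (y s - (KK p s : ℝ)/2) - (y 0 - (KK p 0 : ℝ)/2) := by
    rw [e0, E2, E1, E3]
    ring
  have hl0' : -(1/2 : ℝ) < (p 0).2/(p 0).1 - (KK p 0 : ℝ)/2 := hl0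
  have hu0' : (p 0).2/(p 0).1 - (KK p 0 : ℝ)/2 < 1/2 := hu0
  have hls' : -(1/2 : ℝ) < (p s).2/(p s).1 - (KK p s : ℝ)/2 := hls
  have hus' : (p s).2/(p s).1 - (KK p s : ℝ)/2 < 1/2 := hus
  have hys : y s = (p s).2 / (p s).1 := rfl
  have hy0 : y 0 = (p 0).2 / (p 0).1 := rfl
  rw [hys, hy0] at hmain
  rw [hmain, abs_lt]
  constructor
  · linarith
  · linarith
end

section
/- (Reverse of an excursion.) Let ((a_i,b_i))_{i=0}^{s} be an excursion of the BCZ map, and let (a_{−1}, b_{−1}) ∈ Ω be a point with T(a_{−1},b_{−1}) = (a_0,b_0) (so b_{−1} = a_0). Then the sequence ((c_m,d_m))_{m=0}^{s} defined by (c_m,d_m) := (b_{s−1−m}, a_{s−1−m}) is again an excursion of the BCZ map; its initial x-coordinate is c_0 = b_{s−1} = a_s and its final x-coordinate is c_s = b_{−1} = a_0. -/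
lemma swap_mem_fareyTriangle (x : ℝ × ℝ) (hx : x ∈ fareyTriangle) :
    (x.2, x.1) ∈ fareyTriangle := by
  obtain ⟨h1, h2, h3, h4, h5⟩ := hx
  exact ⟨h3, h4, h1, h2, by dsimp; linarith⟩

lemma rev_step (x : ℝ × ℝ) (hx : x ∈ fareyTriangle) :
    bczT ((bczT x).2, (bczT x).1) = (x.2, x.1) := by
  obtain ⟨h1, h2, h3, h4, h5⟩ := hx
  simp only [bczT]
  have hfloor : ⌊(1 + ((⌊(1 + x.1) / x.2⌋ : ℝ) * x.2 - x.1)) / x.2⌋ = ⌊(1 + x.1) / x.2⌋ := by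
    rw [Int.floor_eq_iff]
    constructor
    · rw [le_div_iff₀ h3]; nlinarith
    · rw [div_lt_iff₀ h3]; nlinarith
  rw [hfloor]
  refine Prod.ext rfl ?_
  dsimp; ring

theorem reverse_excursion (p : ℕ → ℝ × ℝ) (s : ℕ) (h : IsExcursion p s)
    (q : ℝ × ℝ) (hq : q ∈ fareyTriangle) (hqT : bczT q = p 0) :
    IsExcursion
        (fun m => if m < s then ((p (s - 1 - m)).2, (p (s - 1 - m)).1) else (q.2, q.1)) s ∧
      ((fun m => if m < s then ((p (s - 1 - m)).2, (p (s - 1 - m)).1) else (q.2, q.1)) 0).1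
          = (p s).1 ∧
      ((fun m => if m < s then ((p (s - 1 - m)).2, (p (s - 1 - m)).1) else (q.2, q.1)) s).1
          = (p 0).1 := by
  obtain ⟨hs, hmem, hstep, hmid⟩ := h
  have hp0 : (p 0).1 = q.2 := by rw [← hqT]; rfl
  have hx1 : ∀ i < s, (p (i + 1)).1 = (p i).2 := by
    intro i hi; rw [hstep i hi]; rfl
  refine ⟨⟨hs, ?_, ?_, ?_⟩, ?_, ?_⟩
  · intro i hi
    by_cases hi' : i < s
    · simp only [if_pos hi']
      exact swap_mem_fareyTriangle _ (hmem _ (by omega))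
    · simp only [if_neg hi']
      exact swap_mem_fareyTriangle _ hq
  · intro m hm
    by_cases hm' : m + 1 < s
    · have hms : m < s := by omega
      simp only [if_pos hm', if_pos hms]
      have hj : s - 1 - m = (s - 2 - m) + 1 := by omega
      have hj2 : s - 1 - (m + 1) = s - 2 - m := by omega
      rw [hj2, hj, hstep (s - 2 - m) (by omega)]
      exact (rev_step _ (hmem _ (by omega))).symm
    · have hms : m < s := by omega
      simp only [if_pos hms, if_neg hm']
      have h0 : s - 1 - m = 0 := by omega
      rw [h0, ← hqT]
      exact (rev_step q hq).symm
  · intro m hm0 hms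
    simp only [if_pos hms, if_pos (by omega : (0 : ℕ) < s), if_neg (lt_irrefl s)]
    have h0 : (p (s - 1 - 0)).2 = (p s).1 := by
      have e : s - 1 - 0 = s - 1 := by omega
      have e2 : s - 1 + 1 = s := by omega
      rw [e, ← hx1 (s - 1) (by omega), e2]
    have hmval : (p (s - 1 - m)).2 = (p (s - m)).1 := by
      have e2 : s - 1 - m + 1 = s - m := by omega
      rw [← hx1 (s - 1 - m) (by omega), e2]
    have hmidv := hmid (s - m) (by omega) (by omega)
    constructor
    · show (p (s - 1 - 0)).2 < (p (s - 1 - m)).2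
      rw [h0, hmval]; exact hmidv.2
    · show q.2 < (p (s - 1 - m)).2
      rw [← hp0, hmval]; exact hmidv.1
  · simp only [if_pos (by omega : (0 : ℕ) < s)]
    show (p (s - 1 - 0)).2 = (p s).1
    have e : s - 1 - 0 = s - 1 := by omega
    have e2 : s - 1 + 1 = s := by omega
    rw [e, ← hx1 (s - 1) (by omega), e2]
  · simp only [if_neg (lt_irrefl s)]
    exact hp0.symm
end

section
/- Let n ≥ 1 and let 0 = ρ_0 < ρ_1 < ⋯ < ρ_{A_n} = 1 be the Farey sequence of order n, with ρ_i = p_i/q_i in lowest terms. Then for every k with 0 ≤ k ≤ A_n − 2, the point (q_k/n, q_{k+1}/n) lies in the Farey triangle Ω and T(q_k/n, q_{k+1}/n) = (q_{k+1}/n, q_{k+2}/n). -/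
/-- `ρ : ℕ → ℚ`, restricted to indices `0, …, A`, is the Farey sequence of order `n`:
the increasing enumeration of all rationals in `[0,1]` with reduced denominator at most `n`. -/
def IsFareySeq (n A : ℕ) (ρ : ℕ → ℚ) : Prop :=
  ρ 0 = 0 ∧ ρ A = 1 ∧ (∀ i j, i < j → j ≤ A → ρ i < ρ j) ∧
  (∀ i ≤ A, 0 ≤ ρ i ∧ ρ i ≤ 1 ∧ (ρ i).den ≤ n) ∧
  (∀ q : ℚ, 0 ≤ q → q ≤ 1 → q.den ≤ n → ∃ i ≤ A, ρ i = q)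

private lemma farey_adj (n A : ℕ) (ρ : ℕ → ℚ) (hρ : IsFareySeq n A ρ)
    (k : ℕ) (hk : k + 1 ≤ A) :
    ((ρ k).den : ℤ) * (ρ (k+1)).num - (ρ k).num * ((ρ (k+1)).den : ℤ) = 1 ∧
    n < (ρ k).den + (ρ (k+1)).den := by
  obtain ⟨h0, h1, hmono, hmem, hall⟩ := hρ
  set p : ℤ := (ρ k).num with hp
  set q : ℤ := ((ρ k).den : ℤ) with hq
  set p' : ℤ := (ρ (k+1)).num with hp'
  set q' : ℤ := ((ρ (k+1)).den : ℤ) with hq'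
  have hkA : k ≤ A := le_trans (Nat.le_succ k) hk
  have hqpos : 0 < q := by rw [hq]; exact_mod_cast (ρ k).pos
  have hq'pos : 0 < q' := by rw [hq']; exact_mod_cast (ρ (k+1)).pos
  have hqn : q ≤ (n:ℤ) := by rw [hq]; exact_mod_cast (hmem k hkA).2.2
  have hq'n : q' ≤ (n:ℤ) := by rw [hq']; exact_mod_cast (hmem (k+1) hk).2.2
  have hppos : 0 ≤ p := Rat.num_nonneg.mpr (hmem k hkA).1
  -- Bezout
  have hcop : IsCoprime p q := by
    rw [Int.isCoprime_iff_gcd_eq_one]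
    exact (ρ k).reduced
  obtain ⟨u, v, huv⟩ := hcop
  -- q * x₀ - p * y₀ = 1 with x₀ = v, y₀ = -u
  set y : ℤ := (n : ℤ) - ((n : ℤ) - (-u)) % q with hy
  have hmod := Int.emod_nonneg ((n : ℤ) - (-u)) (ne_of_gt hqpos)
  have hmodlt := Int.emod_lt_of_pos ((n : ℤ) - (-u)) hqpos
  have hyn : y ≤ n := by omega
  have hygt : (n : ℤ) - q < y := by omega
  have hypos : 0 < y := by omega
  have hdvd0 : q ∣ (y - (-u)) := by
    have : y - (-u) = ((n : ℤ) - (-u)) - ((n : ℤ) - (-u)) % q := by omega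
    rw [this]
    exact Int.dvd_self_sub_of_emod_eq rfl
  have hdvd : q ∣ 1 + p * y := by
    have : 1 + p * y = q * v + p * (y - (-u)) := by
      have h1 : u * p + v * q = 1 := huv
      ring_nf
      nlinarith [h1]
    rw [this]
    exact dvd_add (Dvd.intro v rfl) (Dvd.dvd.mul_left hdvd0 p)
  obtain ⟨x, hx⟩ := hdvd
  -- q * x - p * y = 1
  have key : q * x - p * y = 1 := by rw [← hx]; ring
  have hxpos : 0 < x := by nlinarith
  have hxycop : IsCoprime x y := ⟨q, -p, by linarith [key]⟩
  set r : ℚ := (x : ℚ) / (y : ℚ) with hr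
  have hrnum : r.num = x := Rat.num_div_eq_of_coprime hypos
    (Int.isCoprime_iff_gcd_eq_one.mp hxycop)
  have hrden : (r.den : ℤ) = y := Rat.den_div_eq_of_coprime hypos
    (Int.isCoprime_iff_gcd_eq_one.mp hxycop)
  have hρk : (ρ k : ℚ) = (p : ℚ) / (q : ℚ) := (Rat.num_div_den (ρ k)).symm
  have hρk1 : (ρ (k+1) : ℚ) = (p' : ℚ) / (q' : ℚ) := (Rat.num_div_den (ρ (k+1))).symm
  have hqR : (0:ℚ) < (q:ℚ) := by exact_mod_cast hqpos
  have hq'R : (0:ℚ) < (q':ℚ) := by exact_mod_cast hq'pos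
  have hyR : (0:ℚ) < (y:ℚ) := by exact_mod_cast hypos
  have hklt : ρ k < r := by
    rw [hρk, hr, div_lt_div_iff₀ hqR hyR]
    have : p * y < x * q := by nlinarith
    exact_mod_cast this
  have hle : ρ (k+1) ≤ r := by
    rcases le_or_gt r 1 with h | h
    · have hr0 : 0 ≤ r := le_of_lt (lt_of_le_of_lt (hmem k hkA).1 hklt)
      have hrden' : r.den ≤ n := by
        have : (r.den : ℤ) ≤ (n:ℤ) := hrden ▸ hyn
        exact_mod_cast this
      obtain ⟨i, hiA, hi⟩ := hall r hr0 h hrden'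
      have hik : k < i := by
        by_contra hc
        push_neg at hc
        rcases lt_or_eq_of_le hc with h' | h'
        · have h2 := hmono i k h' hkA
          rw [hi] at h2
          exact absurd h2 (not_lt.mpr (le_of_lt hklt))
        · exact absurd (h' ▸ hi) (ne_of_lt hklt)
      rcases lt_or_eq_of_le (Nat.succ_le_of_lt hik) with h' | h'
      · exact le_of_lt (by rw [← hi]; exact hmono (k+1) i h' hiA)
      · exact le_of_eq (by rw [← hi, ← h'])
    · exact le_of_lt (lt_of_le_of_lt (hmem (k+1) hk).2.1 h)
  have hnotlt : ¬ ρ (k+1) < r := by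
    intro hlt
    have h1' : p' * y < x * q' := by
      rw [hρk1, hr, div_lt_div_iff₀ hq'R hyR] at hlt
      exact_mod_cast hlt
    have h2' : p * q' < p' * q := by
      have := hmono k (k+1) (Nat.lt_succ_self k) hk
      rw [hρk, hρk1, div_lt_div_iff₀ hqR hq'R] at this
      exact_mod_cast this
    have hid : q' = (x * q' - p' * y) * q + (p' * q - p * q') * y := by
      linear_combination (-q') * key
    have f1 : 1 * q ≤ (x * q' - p' * y) * q :=
      mul_le_mul_of_nonneg_right (by linarith) (le_of_lt hqpos)
    have f2 : 1 * y ≤ (p' * q - p * q') * y :=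
      mul_le_mul_of_nonneg_right (by linarith) (le_of_lt hypos)
    have : q' ≥ q + y := by linarith [hid, f1, f2]
    omega
  have heq : r = ρ (k+1) := le_antisymm (not_lt.mp hnotlt) hle
  have hnum : p' = x := by rw [hp', ← heq, hrnum]
  have hden : q' = y := by rw [hq', ← heq, hrden]
  constructor
  · rw [hnum, hden]; linarith [key]
  · have h3 : (n : ℤ) < q + q' := by omega
    rw [hq, hq'] at h3
    exact_mod_cast h3

theorem bcz_farey_step (n : ℕ) (hn : 1 ≤ n) (ρ : ℕ → ℚ)
    (hρ : IsFareySeq n (fareyLen n) ρ) (k : ℕ) (hk : k + 2 ≤ fareyLen n) :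
    ((((ρ k).den : ℝ) / n, ((ρ (k + 1)).den : ℝ) / n)) ∈ fareyTriangle ∧
      bczT (((ρ k).den : ℝ) / n, ((ρ (k + 1)).den : ℝ) / n) =
        (((ρ (k + 1)).den : ℝ) / n, ((ρ (k + 2)).den : ℝ) / n) := by
  obtain ⟨e1, hs1⟩ := farey_adj n (fareyLen n) ρ hρ k (by omega)
  obtain ⟨e2, hs2⟩ := farey_adj n (fareyLen n) ρ hρ (k+1) (by omega)
  have hmem := hρ.2.2.2.1
  set Q : ℕ := (ρ k).den with hQ
  set Q' : ℕ := (ρ (k+1)).den with hQ'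
  set Q'' : ℕ := (ρ (k+2)).den with hQ''
  have hQpos : 0 < Q := (ρ k).pos
  have hQ'pos : 0 < Q' := (ρ (k+1)).pos
  have hQ''pos : 0 < Q'' := (ρ (k+2)).pos
  have hQn : Q ≤ n := (hmem k (by omega)).2.2
  have hQ'n : Q' ≤ n := (hmem (k+1) (by omega)).2.2
  have hQ''n : Q'' ≤ n := (hmem (k+2) (by omega)).2.2
  have e2' : (Q' : ℤ) * (ρ (k+2)).num - (ρ (k+1)).num * (Q'' : ℤ) = 1 := by
    have : k + 1 + 1 = k + 2 := rfl
    rw [← this]; exact e2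
  -- divisibility
  have hdvd : (Q' : ℤ) ∣ ((Q : ℤ) + (Q'' : ℤ)) := by
    have hcop : IsCoprime ((ρ (k+1)).num) ((Q' : ℤ)) := by
      rw [Int.isCoprime_iff_gcd_eq_one]; exact (ρ (k+1)).reduced
    have h1 : (ρ (k+1)).num * ((Q : ℤ) + (Q'' : ℤ)) =
        (Q' : ℤ) * ((ρ k).num + (ρ (k+2)).num) := by linear_combination e1 - e2'
    have h2 : (Q' : ℤ) ∣ (ρ (k+1)).num * ((Q : ℤ) + (Q'' : ℤ)) :=
      h1 ▸ Dvd.intro _ rfl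
    exact (hcop.symm.dvd_of_dvd_mul_left h2)
  obtain ⟨m, hm⟩ := hdvd
  have hb1 : m * (Q' : ℤ) ≤ (n : ℤ) + Q := by
    have : (Q'' : ℤ) ≤ n := by exact_mod_cast hQ''n
    nlinarith [hm]
  have hb2 : ((n : ℤ) + Q) < (m + 1) * (Q' : ℤ) := by
    have h2' : (n : ℤ) < Q' + Q'' := by exact_mod_cast hs2
    nlinarith [hm]
  have hnR : (0:ℝ) < n := by exact_mod_cast hn
  have hQR : (0:ℝ) < Q := by exact_mod_cast hQpos
  have hQ'R : (0:ℝ) < Q' := by exact_mod_cast hQ'pos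
  have hdiveq : (1 + (Q : ℝ)/n) / ((Q' : ℝ)/n) = ((n : ℝ) + Q) / Q' := by
    field_simp
  have hfloor : ⌊(1 + (Q : ℝ)/n) / ((Q' : ℝ)/n)⌋ = m := by
    rw [hdiveq, Int.floor_eq_iff]
    constructor
    · rw [le_div_iff₀ hQ'R]
      have : ((m * (Q' : ℤ) : ℤ) : ℝ) ≤ (((n : ℤ) + Q : ℤ) : ℝ) := by exact_mod_cast hb1
      push_cast at this ⊢; linarith
    · rw [div_lt_iff₀ hQ'R]
      have : ((((n : ℤ) + Q) : ℤ) : ℝ) < (((m + 1) * (Q' : ℤ) : ℤ) : ℝ) := by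
        exact_mod_cast hb2
      push_cast at this ⊢; linarith
  refine ⟨⟨?_, ?_, ?_, ?_, ?_⟩, ?_⟩
  · exact div_pos hQR hnR
  · rw [div_le_one hnR]; exact_mod_cast hQn
  · exact div_pos hQ'R hnR
  · rw [div_le_one hnR]; exact_mod_cast hQ'n
  · have h : (n : ℝ) < Q + Q' := by exact_mod_cast hs1
    rw [← add_div, lt_div_iff₀ hnR]
    linarith
  · unfold bczT
    simp only [Prod.mk.injEq]
    refine ⟨trivial, ?_⟩
    rw [hfloor]
    have hmR : (Q'' : ℝ) = m * Q' - Q := by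
      have : (Q'' : ℤ) = Q' * m - Q := by linarith [hm]
      have := congrArg (fun z : ℤ => (z : ℝ)) this
      push_cast at this; linarith
    rw [hmR]
    field_simp
end

section
/- For every (a,b) in the Farey triangle Ω, −1 ≤ R(a,b) − k̂(a,b) < 2. -/
theorem R_sub_khat_bounds (p : ℝ × ℝ) (hp : p ∈ fareyTriangle) :
    -1 ≤ 1 / (p.1 * p.2) - khat p ∧ 1 / (p.1 * p.2) - khat p < 2 := by
  obtain ⟨ha, ha1, hb, hb1, hab⟩ := hp
  set a := p.1 with hA
  set b := p.2 with hB
  have h1 : (⌊(1 + a) / b⌋ : ℝ) * b ≤ 1 + a := by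
    rw [← le_div_iff₀ hb]; exact Int.floor_le _
  have h2 : 1 + a < ((⌊(1 + a) / b⌋ : ℝ) + 1) * b := by
    rw [← div_lt_iff₀ hb]; exact Int.lt_floor_add_one _
  have h3 : (⌊(1 + b) / a⌋ : ℝ) * a ≤ 1 + b := by
    rw [← le_div_iff₀ ha]; exact Int.floor_le _
  have h4 : 1 + b < ((⌊(1 + b) / a⌋ : ℝ) + 1) * a := by
    rw [← div_lt_iff₀ ha]; exact Int.lt_floor_add_one _
  have hab0 : 0 < a * b := mul_pos ha hb
  have hR : 1 / (a * b) * (a * b) = 1 := one_div_mul_cancel (ne_of_gt hab0)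
  unfold khat
  rw [← hA, ← hB]
  constructor
  · nlinarith [mul_le_mul_of_nonneg_right h1 ha.le, mul_le_mul_of_nonneg_right h3 hb.le,
      mul_pos ha hb, mul_nonneg (sub_nonneg.2 ha1) (sub_nonneg.2 hb1),
      sq_nonneg (a - b), mul_nonneg (sub_nonneg.2 ha1) (sub_nonneg.2 hb1),
      mul_pos (sub_pos.2 hab) ha, mul_pos (sub_pos.2 hab) hb]
  · nlinarith [mul_lt_mul_of_pos_right h2 ha, mul_lt_mul_of_pos_right h4 hb,
      mul_pos (sub_pos.2 hab) (add_pos (add_pos ha hb) two_pos), sq_nonneg (a - b)]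
end

section
/- Let (a_1,…,a_n) be a generalized arithmetic sequence, let m with 2 ≤ m ≤ n−1 be such that a_m ≥ a_i for all 1 ≤ i ≤ n, and suppose there exists j with a_m > a_j. Then a_m is a local maximum, i.e. a_m > a_{m−1} and a_m > a_{m+1} (and consequently a_m = a_{m−1} + a_{m+1}). -/
/-- A generalized arithmetic sequence `(a 1, …, a n)` of positive reals:
each interior term divides the sum of its two neighbors. -/
def IsGAS (n : ℕ) (a : ℕ → ℝ) : Prop :=
  (∀ i, 1 ≤ i → i ≤ n → 0 < a i) ∧
  (∀ i, 2 ≤ i → i + 1 ≤ n → ∃ c : ℕ+, a (i - 1) + a (i + 1) = (c : ℝ) * a i)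

/-- A largest interior term of a generalized arithmetic sequence which is strictly larger
than some term is a local maximum, and equals the sum of its two neighbors. -/
theorem gas_largest_is_local_max (n : ℕ) (a : ℕ → ℝ) (h : IsGAS n a)
    (m : ℕ) (hm1 : 2 ≤ m) (hm2 : m + 1 ≤ n)
    (hmax : ∀ i, 1 ≤ i → i ≤ n → a i ≤ a m)
    (j : ℕ) (hj1 : 1 ≤ j) (hj2 : j ≤ n) (hj : a j < a m) :
    a (m - 1) < a m ∧ a (m + 1) < a m ∧ a m = a (m - 1) + a (m + 1) := by
  obtain ⟨hpos, hrel⟩ := h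
  have ham : 0 < a m := hpos m (by omega) (by omega)
  obtain ⟨c, hc⟩ := hrel m hm1 hm2
  have h1 : a (m - 1) ≤ a m := hmax _ (by omega) (by omega)
  have h2 : a (m + 1) ≤ a m := hmax _ (by omega) (by omega)
  have p1 : 0 < a (m - 1) := hpos _ (by omega) (by omega)
  have p2 : 0 < a (m + 1) := hpos _ (by omega) (by omega)
  by_cases hc1 : (c : ℕ) = 1
  · have hone : ((c : ℕ) : ℝ) = 1 := by rw [hc1]; norm_num
    rw [show ((c : ℕ+) : ℝ) = ((c : ℕ) : ℝ) from rfl, hone, one_mul] at hc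
    exact ⟨by linarith, by linarith, by linarith⟩
  · exfalso
    have hc2 : (2 : ℝ) ≤ ((c : ℕ) : ℝ) := by
      have := c.pos
      exact_mod_cast (show 2 ≤ (c : ℕ) by omega)
    have hcr : a (m - 1) + a (m + 1) = ((c : ℕ) : ℝ) * a m := by exact_mod_cast hc
    have e1 : a (m - 1) = a m := by nlinarith
    have e2 : a (m + 1) = a m := by nlinarith
    have step_up : ∀ i, 2 ≤ i → i + 1 ≤ n → a (i - 1) = a m → a i = a m →
        a (i + 1) = a m := by
      intro i hi hin f1 f2
      obtain ⟨d, hd⟩ := hrel i hi hin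
      have hdr : a (i - 1) + a (i + 1) = ((d : ℕ) : ℝ) * a i := by exact_mod_cast hd
      have hle : a (i + 1) ≤ a m := hmax _ (by omega) hin
      have hp : 0 < a (i + 1) := hpos _ (by omega) hin
      rw [f1, f2] at hdr
      by_cases hdd : (d : ℕ) = 1
      · rw [hdd] at hdr; push_cast at hdr; linarith
      · have hd2 : (2 : ℝ) ≤ ((d : ℕ) : ℝ) := by
          have := d.pos
          exact_mod_cast (show 2 ≤ (d : ℕ) by omega)
        nlinarith
    have step_down : ∀ i, 2 ≤ i → i + 1 ≤ n → a (i + 1) = a m → a i = a m →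
        a (i - 1) = a m := by
      intro i hi hin f1 f2
      obtain ⟨d, hd⟩ := hrel i hi hin
      have hdr : a (i - 1) + a (i + 1) = ((d : ℕ) : ℝ) * a i := by exact_mod_cast hd
      have hle : a (i - 1) ≤ a m := hmax _ (by omega) (by omega)
      have hp : 0 < a (i - 1) := hpos _ (by omega) (by omega)
      rw [f1, f2] at hdr
      by_cases hdd : (d : ℕ) = 1
      · rw [hdd] at hdr; push_cast at hdr; linarith
      · have hd2 : (2 : ℝ) ≤ ((d : ℕ) : ℝ) := by
          have := d.pos
          exact_mod_cast (show 2 ≤ (d : ℕ) by omega)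
        nlinarith
    have up : ∀ k, m ≤ k → k ≤ n → a k = a m := by
      intro k
      induction k using Nat.strong_induction_on with
      | _ k ih =>
        intro hk1 hk2
        rcases (show k = m ∨ k = m + 1 ∨ m + 2 ≤ k by omega) with rfl | rfl | hk
        · rfl
        · exact e2
        · have r2 := ih (k - 1) (by omega) (by omega) (by omega)
          have r3 := ih (k - 2) (by omega) (by omega) (by omega)
          have r3' : a (k - 1 - 1) = a m := by rw [show k - 1 - 1 = k - 2 by omega]; exact r3
          have := step_up (k - 1) (by omega) (by omega) r3' r2
          rwa [show k - 1 + 1 = k by omega] at this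
    have down : ∀ d, d ≤ m - 1 → a (m - d) = a m := by
      intro d
      induction d using Nat.strong_induction_on with
      | _ d ih =>
        intro hd
        rcases (show d = 0 ∨ d = 1 ∨ 2 ≤ d by omega) with rfl | rfl | hd2
        · rfl
        · exact e1
        · have r2 := ih (d - 1) (by omega) (by omega)
          have r3 := ih (d - 2) (by omega) (by omega)
          have f1 : a (m - d + 1 + 1) = a m := by
            rw [show m - d + 1 + 1 = m - (d - 2) by omega]; exact r3
          have f2 : a (m - d + 1) = a m := by
            rw [show m - d + 1 = m - (d - 1) by omega]; exact r2
          have := step_down (m - d + 1) (by omega) (by omega) f1 f2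
          rwa [show m - d + 1 - 1 = m - d by omega] at this
    rcases le_or_gt j m with hjm | hjm
    · have := down (m - j) (by omega)
      rw [show m - (m - j) = j by omega] at this
      linarith
    · have := up j (by omega) hj2
      linarith
end

section
/- (Closure of the space of generalized arithmetic sequences.) Let (a_1,…,a_n) be a generalized arithmetic sequence with n ≥ 3, and let m with 2 ≤ m ≤ n−1 be such that a_m > a_{m−1} and a_m > a_{m+1}. Then the sequence (a_1,…,a_{m−1},a_{m+1},…,a_n) obtained by deleting a_m is again a generalized arithmetic sequence. -/
/-- Closure: deleting a local maximum from a generalized arithmetic sequence of length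
`n ≥ 3` yields a generalized arithmetic sequence (of length `n − 1`). -/
theorem gas_closure (n : ℕ) (hn : 3 ≤ n) (a : ℕ → ℝ) (h : IsGAS n a)
    (m : ℕ) (hm1 : 2 ≤ m) (hm2 : m + 1 ≤ n)
    (hmax₁ : a (m - 1) < a m) (hmax₂ : a (m + 1) < a m) :
    IsGAS (n - 1) (fun i => if i < m then a i else a (i + 1)) := by
  obtain ⟨hpos, hdiv⟩ := h
  have ham : 0 < a m := hpos m (by omega) (by omega)
  obtain ⟨c, hc⟩ := hdiv m hm1 hm2
  have hkey : a (m - 1) + a (m + 1) = a m := by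
    have hc1 : (c : ℕ) = 1 := by
      by_contra h1
      have h2 : (2 : ℕ) ≤ c := by have := c.pos; omega
      have h2' : (2 : ℝ) * a m ≤ (c : ℝ) * a m := by
        apply mul_le_mul_of_nonneg_right _ ham.le
        exact_mod_cast h2
      nlinarith
    have : (c : ℝ) = 1 := by exact_mod_cast hc1
    rw [this] at hc; linarith
  constructor
  · intro i hi1 hi2
    dsimp only
    split_ifs with hlt
    · exact hpos i hi1 (by omega)
    · exact hpos (i + 1) (by omega) (by omega)
  · intro i h2i hin
    show ∃ d : ℕ+,
      (if i - 1 < m then a (i - 1) else a (i - 1 + 1)) +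
        (if i + 1 < m then a (i + 1) else a (i + 1 + 1)) =
        (d : ℝ) * (if i < m then a i else a (i + 1))
    rcases lt_trichotomy (i + 1) m with h1 | h1 | h1
    · -- untouched, left of m
      obtain ⟨d, hd⟩ := hdiv i h2i (by omega)
      exact ⟨d, by rw [if_pos (by omega), if_pos h1, if_pos (by omega)]; exact hd⟩
    · -- i = m - 1
      have him : i = m - 1 := by omega
      obtain ⟨d, hd⟩ := hdiv (m - 1) (by omega) (by omega)
      have hrw : m - 1 - 1 = m - 2 := by omega
      have hrw2 : m - 1 + 1 = m := by omega
      rw [hrw, hrw2] at hd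
      have hp2 : 0 < a (m - 2) := hpos (m - 2) (by omega) (by omega)
      have hd2 : (2 : ℕ) ≤ d := by
        by_contra hle
        have : (d : ℕ) = 1 := by have := d.pos; omega
        have : (d : ℝ) = 1 := by exact_mod_cast this
        rw [this] at hd; nlinarith
      refine ⟨⟨(d : ℕ) - 1, by omega⟩, ?_⟩
      rw [if_pos (by omega), if_neg (by omega), if_pos (by omega)]
      have hrw3 : i - 1 = m - 2 := by omega
      have hrw4 : i + 1 + 1 = m + 1 := by omega
      rw [hrw3, hrw4, him]
      show a (m - 2) + a (m + 1) = (((d : ℕ) - 1 : ℕ) : ℝ) * a (m - 1)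
      rw [Nat.cast_sub (by have := d.pos; omega)]
      push_cast
      nlinarith [hd, hkey]
    · rcases lt_trichotomy i m with h2 | h2 | h2
      · omega
      · -- i = m
        obtain ⟨d, hd⟩ := hdiv (m + 1) (by omega) (by omega)
        have hrw : m + 1 - 1 = m := by omega
        rw [hrw] at hd
        have hd2 : (2 : ℕ) ≤ d := by
          by_contra hle
          have : (d : ℕ) = 1 := by have := d.pos; omega
          have : (d : ℝ) = 1 := by exact_mod_cast this
          rw [this] at hd
          have hp3 : 0 < a (m + 2) := hpos (m + 2) (by omega) (by omega)
          nlinarith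
        refine ⟨⟨(d : ℕ) - 1, by omega⟩, ?_⟩
        rw [if_pos (by omega), if_neg (by omega), if_neg (by omega)]
        have hrw3 : i - 1 = m - 1 := by omega
        rw [hrw3, h2]
        show a (m - 1) + a (m + 1 + 1) = (((d : ℕ) - 1 : ℕ) : ℝ) * a (m + 1)
        rw [Nat.cast_sub (by have := d.pos; omega)]
        push_cast
        nlinarith [hd, hkey]
      · -- i > m, untouched right part
        obtain ⟨d, hd⟩ := hdiv (i + 1) (by omega) (by omega)
        have hrw : i + 1 - 1 = i := by omega
        rw [hrw] at hd
        refine ⟨d, ?_⟩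
        rw [if_neg (by omega), if_neg (by omega), if_neg (by omega)]
        have hrw2 : i - 1 + 1 = i := by omega
        rw [hrw2]
        exact hd
end

section
/- Let n ≥ 1 and let 0 = ρ_0 < ρ_1 < ⋯ < ρ_{A_n} = 1 be the Farey sequence of order n, with ρ_i = p_i/q_i in lowest terms. Then for every i with 1 ≤ i ≤ A_n − 2, k̂(T^{i}(1/n, 1)) = ( (q_i + q_{i+2})/q_{i+1} + (q_{i−1} + q_{i+1})/q_i ) / 2. -/
lemma rat_sub_mul (x y : ℚ) :
    (y - x) * ((x.den : ℚ) * (y.den : ℚ)) = ((y.num * x.den - x.num * y.den : ℤ) : ℚ) := by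
  have hx := Rat.num_div_den x
  have hy := Rat.num_div_den y
  have hxd : (x.den : ℚ) ≠ 0 := Nat.cast_ne_zero.mpr x.den_nz
  have hyd : (y.den : ℚ) ≠ 0 := Nat.cast_ne_zero.mpr y.den_nz
  push_cast
  nth_rewrite 1 [← hx, ← hy]
  field_simp

lemma cross_pos {x y : ℚ} (h : x < y) : 1 ≤ y.num * x.den - x.num * y.den := by
  have h1 : (0:ℚ) < (y - x) * ((x.den : ℚ) * (y.den : ℚ)) := by
    apply mul_pos (by linarith)
    have := x.pos; have := y.pos
    positivity
  rw [rat_sub_mul] at h1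
  have : (0:ℤ) < y.num * x.den - x.num * y.den := by exact_mod_cast h1
  omega

lemma farey_neighbor {n A : ℕ} (hn : 1 ≤ n) {ρ : ℕ → ℚ} (h : IsFareySeq n A ρ)
    {i : ℕ} (hi : i + 1 ≤ A) :
    (ρ (i+1)).num * (ρ i).den - (ρ i).num * (ρ (i+1)).den = 1 ∧
    (n : ℤ) < (ρ i).den + (ρ (i+1)).den := by
  obtain ⟨h0, hA, hmono, hrange, hsurj⟩ := h
  set a : ℤ := (ρ i).num with ha
  set b : ℤ := ((ρ i).den : ℤ) with hb
  have hiA : i ≤ A := by omega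
  obtain ⟨hge0, hle1, hden⟩ := hrange i hiA
  have hb0 : 0 < b := by rw [hb]; exact_mod_cast (ρ i).pos
  have hbn : b ≤ (n : ℤ) := by rw [hb]; exact_mod_cast hden
  have ha0 : 0 ≤ a := Rat.num_nonneg.mpr hge0
  have hilt : ρ i < 1 := by
    have := hmono i A (by omega) le_rfl
    rwa [hA] at this
  have hab : a < b := by
    rw [← Rat.num_div_den (ρ i)] at hilt
    have hd : (0:ℚ) < ((ρ i).den : ℚ) := by exact_mod_cast (ρ i).pos
    have : ((ρ i).num : ℚ) < ((ρ i).den : ℚ) := by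
      calc ((ρ i).num : ℚ) = ((ρ i).num : ℚ)/(ρ i).den * (ρ i).den := by field_simp
        _ < 1 * (ρ i).den := mul_lt_mul_of_pos_right hilt hd
        _ = (ρ i).den := one_mul _
    rw [ha, hb]; exact_mod_cast this
  have hcop : IsCoprime a b := by
    rw [Int.isCoprime_iff_gcd_eq_one]
    exact (ρ i).reduced
  obtain ⟨u, v, huv⟩ := hcop
  set d : ℤ := (n : ℤ) - ((n + u) % b) with hd
  have hmod0 : 0 ≤ ((n:ℤ) + u) % b := Int.emod_nonneg _ (by omega)
  have hmodlt : ((n:ℤ) + u) % b < b := Int.emod_lt_of_pos _ hb0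
  have hd_hi : d ≤ n := by omega
  have hd_lo : (n : ℤ) - b < d := by omega
  have hd0 : 0 < d := by omega
  clear_value d
  have hdvd : b ∣ d + u := by
    have h2 := Int.mul_ediv_add_emod ((n:ℤ) + u) b
    exact ⟨((n:ℤ) + u) / b, by omega⟩
  obtain ⟨t, ht⟩ := hdvd
  have hdvd2 : b ∣ a * d + 1 := by
    refine ⟨a * t + v, ?_⟩
    have : a * d + 1 = a * (d + u) + v * b := by linarith
    rw [this, ht]; ring
  obtain ⟨c, hc⟩ := hdvd2
  have hcb : c * b - a * d = 1 := by linarith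
  have hc0 : 0 < c := by nlinarith
  have hcd : c ≤ d := by nlinarith
  set q : ℚ := (c : ℚ) / (d : ℚ) with hq
  have hcopcd : Nat.Coprime c.natAbs d.natAbs :=
    Int.isCoprime_iff_gcd_eq_one.mp ⟨b, -a, by linarith⟩
  have hqnum : q.num = c := Rat.num_div_eq_of_coprime hd0 hcopcd
  have hqden : (q.den : ℤ) = d := Rat.den_div_eq_of_coprime hd0 hcopcd
  have hdq : (0:ℚ) < (d:ℚ) := by exact_mod_cast hd0
  have hq0 : 0 ≤ q := by
    apply div_nonneg _ hdq.le
    exact_mod_cast hc0.le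
  have hq1 : q ≤ 1 := by
    rw [hq, div_le_one hdq]
    exact_mod_cast hcd
  have hqden_le : q.den ≤ n := by
    have : (q.den : ℤ) ≤ (n : ℤ) := by rw [hqden]; exact hd_hi
    exact_mod_cast this
  have hlt : ρ i < q := by
    conv_lhs => rw [← Rat.num_div_den (ρ i)]
    rw [hq, div_lt_div_iff₀ (by exact_mod_cast (ρ i).pos) hdq]
    have : a * d < c * b := by linarith
    rw [← ha]
    push_cast
    exact_mod_cast this
  obtain ⟨j, hjA, hj⟩ := hsurj q hq0 hq1 hqden_le
  have hij : i < j := by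
    by_contra hc'
    push_neg at hc'
    rcases lt_or_eq_of_le hc' with h' | h'
    · exact absurd (hj ▸ hmono j i h' hiA) (by linarith)
    · rw [h'] at hj; linarith [hj ▸ hlt]
  have hji : j = i + 1 := by
    by_contra hne
    have hj2 : i + 2 ≤ j := by omega
    set r : ℚ := ρ (i+1) with hr
    have hr1 : ρ i < r := hmono i (i+1) (by omega) hi
    have hr2 : r < q := hj ▸ hmono (i+1) j (by omega) hjA
    have hrden : r.den ≤ n := (hrange (i+1) hi).2.2
    have e1 : 1 ≤ r.num * b - a * r.den := cross_pos hr1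
    have e2 : 1 ≤ c * (r.den:ℤ) - r.num * d := by
      have := cross_pos hr2
      rwa [hqnum, hqden] at this
    have key : (r.den : ℤ) = d * (r.num * b - a * r.den) + b * (c * r.den - r.num * d) := by
      linear_combination (-(r.den : ℤ)) * hcb
    have f1 : d * 1 ≤ d * (r.num * b - a * (r.den:ℤ)) := mul_le_mul_of_nonneg_left e1 hd0.le
    have f2 : b * 1 ≤ b * (c * (r.den:ℤ) - r.num * d) := mul_le_mul_of_nonneg_left e2 hb0.le
    have : (n : ℤ) < (r.den : ℤ) := by
      have : b + d ≤ (r.den : ℤ) := by linarith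
      omega
    have : (n : ℤ) < (n : ℤ) := lt_of_lt_of_le this (by exact_mod_cast hrden)
    omega
  rw [hji] at hj
  rw [hj, hqnum]
  rw [hqden]
  constructor
  · linarith
  · omega

lemma floor_cast_div {x y k : ℤ} (hy : 0 < y) (h1 : k * y ≤ x) (h2 : x < (k+1)*y) :
    ⌊(x:ℝ)/(y:ℝ)⌋ = k := by
  have hY : (0:ℝ) < (y:ℝ) := by exact_mod_cast hy
  rw [Int.floor_eq_iff]
  constructor
  · rw [le_div_iff₀ hY]; exact_mod_cast h1
  · rw [div_lt_iff₀ hY]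
    calc (x:ℝ) < (((k+1)*y : ℤ) : ℝ) := by exact_mod_cast h2
      _ = ((k:ℝ)+1)*y := by push_cast; ring

/-- key floor identity: for `i+2 ≤ A` there is `k` with
`k * q(i+1) = q i + q (i+2)` which equals both relevant floors. -/
lemma farey_step {n A : ℕ} (hn : 1 ≤ n) {ρ : ℕ → ℚ} (h : IsFareySeq n A ρ)
    {i : ℕ} (hi : i + 2 ≤ A) :
    ∃ k : ℤ, k * ((ρ (i+1)).den : ℤ) = ((ρ i).den : ℤ) + ((ρ (i+2)).den : ℤ) ∧
      ⌊((n : ℝ) + ((ρ i).den : ℝ)) / ((ρ (i+1)).den : ℝ)⌋ = k ∧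
      ⌊((n : ℝ) + ((ρ (i+2)).den : ℝ)) / ((ρ (i+1)).den : ℝ)⌋ = k := by
  obtain ⟨e1, f1⟩ := farey_neighbor hn h (show i + 1 ≤ A by omega)
  obtain ⟨e2, f2⟩ := farey_neighbor hn h (show (i+1) + 1 ≤ A by omega)
  set p : ℤ := (ρ i).num
  set p' : ℤ := (ρ (i+1)).num
  set p'' : ℤ := (ρ (i+2)).num
  set q : ℤ := ((ρ i).den : ℤ) with hq
  set q' : ℤ := ((ρ (i+1)).den : ℤ) with hq'
  set q'' : ℤ := ((ρ (i+2)).den : ℤ) with hq''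
  have hq0 : 0 < q := by rw [hq]; exact_mod_cast (ρ i).pos
  have hq'0 : 0 < q' := by rw [hq']; exact_mod_cast (ρ (i+1)).pos
  have hq''0 : 0 < q'' := by rw [hq'']; exact_mod_cast (ρ (i+2)).pos
  have hqn : q ≤ n := by rw [hq]; exact_mod_cast (h.2.2.2.1 i (by omega)).2.2
  have hq''n : q'' ≤ n := by rw [hq'']; exact_mod_cast (h.2.2.2.1 (i+2) hi).2.2
  have e2' : p'' * q' - p' * q'' = 1 := e2
  -- q' divides q + q''
  have hdvd : q' ∣ q + q'' := by
    have hcop : IsCoprime p' q' := by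
      rw [Int.isCoprime_iff_gcd_eq_one]; exact (ρ (i+1)).reduced
    have hmul : p' * (q + q'') = q' * (p + p'') := by linear_combination e1 - e2'
    exact (IsCoprime.symm hcop).dvd_of_dvd_mul_left ⟨p + p'', by linarith [hmul]⟩
  obtain ⟨k, hk⟩ := hdvd
  have hk' : k * q' = q + q'' := by rw [mul_comm]; omega
  have hkk : (k+1) * q' = k * q' + q' := by ring
  have hcast2 : ((ρ (i+1)).den : ℝ) = ((q' : ℤ) : ℝ) := by rw [hq']; norm_cast
  refine ⟨k, hk', ?_, ?_⟩
  · have hcast : (n:ℝ) + ((ρ i).den : ℝ) = (((n:ℤ) + q : ℤ) : ℝ) := by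
      rw [hq]; push_cast; ring
    rw [hcast, hcast2]
    exact floor_cast_div hq'0 (by linarith) (by linarith)
  · have hcast : (n:ℝ) + ((ρ (i+2)).den : ℝ) = (((n:ℤ) + q'' : ℤ) : ℝ) := by
      rw [hq'']; push_cast; ring
    rw [hcast, hcast2]
    exact floor_cast_div hq'0 (by linarith) (by linarith)

lemma farey_orbit {n A : ℕ} (hn : 1 ≤ n) {ρ : ℕ → ℚ} (h : IsFareySeq n A ρ)
    (i : ℕ) (hi : i + 1 ≤ A) :
    bczT^[i] (1 / (n : ℝ), 1) = (((ρ i).den : ℝ) / n, ((ρ (i+1)).den : ℝ) / n) := by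
  induction i with
  | zero =>
    have hd0 : (ρ 0).den = 1 := by rw [h.1]; rfl
    have hn0 : (ρ 0).num = 0 := by rw [h.1]; rfl
    obtain ⟨e1, f1⟩ := farey_neighbor hn h (show 0 + 1 ≤ A by omega)
    have hd1 : (ρ 1).den = n := by
      have hle : (ρ 1).den ≤ n := (h.2.2.2.1 1 hi).2.2
      rw [hd0] at f1
      norm_num at f1
      omega
    simp only [Function.iterate_zero, id_eq, hd0, hd1]
    have hnn : (n:ℝ) ≠ 0 := by positivity
    rw [Prod.ext_iff]
    constructor
    · simp
    · simp only
      field_simp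
  | succ m ih =>
    have hm : m + 1 ≤ A := by omega
    rw [Function.iterate_succ_apply', ih hm]
    obtain ⟨k, hk, hfl1, _⟩ := farey_step hn h (show m + 2 ≤ A by omega)
    have hnn : (0:ℝ) < (n:ℝ) := by exact_mod_cast hn
    have hq'0 : (0:ℝ) < ((ρ (m+1)).den : ℝ) := by exact_mod_cast (ρ (m+1)).pos
    have harg : (1 + ((ρ m).den : ℝ) / n) / (((ρ (m+1)).den : ℝ) / n)
        = ((n : ℝ) + ((ρ m).den : ℝ)) / ((ρ (m+1)).den : ℝ) := by
      field_simp
    simp only [bczT]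
    rw [harg, hfl1]
    rw [Prod.ext_iff]
    refine ⟨rfl, ?_⟩
    simp only
    have : (k : ℝ) * ((ρ (m+1)).den : ℝ) = ((ρ m).den : ℝ) + ((ρ (m+2)).den : ℝ) := by
      exact_mod_cast congrArg (fun z : ℤ => (z : ℝ)) hk
    field_simp
    linarith

theorem khat_along_farey (n : ℕ) (hn : 1 ≤ n) (ρ : ℕ → ℚ)
    (hρ : IsFareySeq n (fareyLen n) ρ) (i : ℕ) (hi : 1 ≤ i) (hi2 : i + 2 ≤ fareyLen n) :
    khat (bczT^[i] (1 / (n : ℝ), 1)) =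
      ((((ρ i).den : ℝ) + ((ρ (i + 2)).den : ℝ)) / ((ρ (i + 1)).den : ℝ) +
        (((ρ (i - 1)).den : ℝ) + ((ρ (i + 1)).den : ℝ)) / ((ρ i).den : ℝ)) / 2 := by
  obtain ⟨j, rfl⟩ : ∃ j, i = j + 1 := ⟨i - 1, by omega⟩
  set A := fareyLen n with hA
  rw [farey_orbit hn hρ (j+1) (by omega)]
  obtain ⟨k, hk, hfl1, _⟩ := farey_step hn hρ (show (j+1) + 2 ≤ A by omega)
  obtain ⟨k', hk', _, hfl2⟩ := farey_step hn hρ (show j + 2 ≤ A by omega)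
  have hnn : (0:ℝ) < (n:ℝ) := by exact_mod_cast hn
  have d1 : (0:ℝ) < ((ρ (j+1)).den : ℝ) := by exact_mod_cast (ρ (j+1)).pos
  have d2 : (0:ℝ) < ((ρ (j+2)).den : ℝ) := by exact_mod_cast (ρ (j+2)).pos
  simp only [khat]
  have harg1 : (1 + ((ρ (j+1)).den : ℝ) / n) / (((ρ (j+2)).den : ℝ) / n)
      = ((n : ℝ) + ((ρ (j+1)).den : ℝ)) / ((ρ (j+2)).den : ℝ) := by field_simp
  have harg2 : (1 + ((ρ (j+2)).den : ℝ) / n) / (((ρ (j+1)).den : ℝ) / n)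
      = ((n : ℝ) + ((ρ (j+2)).den : ℝ)) / ((ρ (j+1)).den : ℝ) := by field_simp
  have e1 : ρ (j + 1 + 1) = ρ (j + 2) := by norm_num
  have e2 : ρ (j + 1 + 2) = ρ (j + 3) := by norm_num
  have e3 : ρ (j + 1 - 1) = ρ j := by norm_num
  rw [e1, e2, e3, harg1, harg2, hfl1, hfl2]
  have hkr : (k : ℝ) * ((ρ (j+2)).den : ℝ) = ((ρ (j+1)).den : ℝ) + ((ρ (j+1+2)).den : ℝ) := by
    exact_mod_cast congrArg (fun z : ℤ => (z : ℝ)) hk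
  have hkr' : (k' : ℝ) * ((ρ (j+1)).den : ℝ) = ((ρ j).den : ℝ) + ((ρ (j+2)).den : ℝ) := by
    exact_mod_cast congrArg (fun z : ℤ => (z : ℝ)) hk'
  rw [e2] at hkr
  congr 1
  have t1 : (k : ℝ) = (((ρ (j+1)).den : ℝ) + ((ρ (j+3)).den : ℝ)) / ((ρ (j+2)).den : ℝ) := by
    rw [eq_div_iff d2.ne']; linarith
  have t2 : (k' : ℝ) = (((ρ j).den : ℝ) + ((ρ (j+2)).den : ℝ)) / ((ρ (j+1)).den : ℝ) := by
    rw [eq_div_iff d1.ne']; linarith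
  rw [t1, t2]
end

section
/- (Existence and uniqueness of excursions.) For every pair (a,b) with 0 < a ≤ 1 and 0 < b ≤ 1, there exists an excursion ((a_i,b_i))_{i=0}^{s} of the BCZ map with a_0 = a and a_s = b, and it is unique: if ((a_i,b_i))_{i=0}^{s} and ((a'_i,b'_i))_{i=0}^{s'} are excursions with a_0 = a'_0 = a, a_s = a'_{s'} = b, then s = s' and (a_i,b_i) = (a'_i,b'_i) for all 0 ≤ i ≤ s. -/
/-! ### Auxiliary development -/

/-- The unique element of `(1-v, 1]` congruent to `u` modulo `v`. -/
noncomputable def nx (u v : ℝ) : ℝ := u + (⌊(1 - u) / v⌋ : ℝ) * v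

lemma nx_lb {u v : ℝ} (hv : 0 < v) : 1 - v < nx u v := by
  have h := Int.lt_floor_add_one ((1 - u) / v)
  rw [div_lt_iff₀ hv] at h
  unfold nx; nlinarith

lemma nx_ub {u v : ℝ} (hv : 0 < v) : nx u v ≤ 1 := by
  have h := Int.floor_le ((1 - u) / v)
  rw [le_div_iff₀ hv] at h
  unfold nx; linarith

lemma nx_spec (u v : ℝ) : ∃ k : ℤ, nx u v = u + (k : ℝ) * v := ⟨_, rfl⟩

lemma interval_unique {v t t' : ℝ} (hv : 0 < v) (ht : 1 - v < t) (ht1 : t ≤ 1)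
    (ht' : 1 - v < t') (ht1' : t' ≤ 1) (k : ℤ) (hk : t - t' = (k : ℝ) * v) : t = t' := by
  have h1 : (k : ℝ) * v < 1 * v := by linarith
  have h2 : (-1 : ℝ) * v < (k : ℝ) * v := by linarith
  have hk1 : (k : ℝ) < 1 := lt_of_mul_lt_mul_right h1 hv.le
  have hk2 : (-1 : ℝ) < (k : ℝ) := lt_of_mul_lt_mul_right h2 hv.le
  have hk3 : k < 1 := by exact_mod_cast hk1
  have hk4 : -1 < k := by exact_mod_cast hk2
  have hk0 : k = 0 := by omega
  rw [hk0] at hk; push_cast at hk; linarith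

lemma nx_unique {u v t : ℝ} (hv : 0 < v) (ht : 1 - v < t) (ht1 : t ≤ 1)
    (k : ℤ) (hk : t = u + (k : ℝ) * v) : t = nx u v := by
  obtain ⟨k1, h1⟩ := nx_spec u v
  refine interval_unique hv ht ht1 (nx_lb hv) (nx_ub hv) (k - k1) ?_
  rw [h1, hk]; push_cast; ring

lemma nx_congr {u u' v : ℝ} (hv : 0 < v) (k : ℤ) (h : u - u' = (k : ℝ) * v) :
    nx u v = nx u' v := by
  obtain ⟨k1, h1⟩ := nx_spec u v
  exact nx_unique hv (nx_lb hv) (nx_ub hv) (k1 + k)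
    (by rw [h1]; push_cast; linarith)

lemma nx_inj {u u' v : ℝ} (h : nx u v = nx u' v) : ∃ k : ℤ, u - u' = (k : ℝ) * v := by
  obtain ⟨k1, h1⟩ := nx_spec u v
  obtain ⟨k2, h2⟩ := nx_spec u' v
  exact ⟨k2 - k1, by rw [h1, h2] at h; push_cast; linarith⟩

lemma mem_farey {v t : ℝ} (hv0 : 0 < v) (hv1 : v ≤ 1) (ht : 1 - v < t) (ht1 : t ≤ 1) :
    ((v, t) : ℝ × ℝ) ∈ fareyTriangle :=
  ⟨hv0, hv1, by simp only []; linarith, ht1, by simp only []; linarith⟩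

lemma bczT_mem {p : ℝ × ℝ} (hp : p ∈ fareyTriangle) :
    bczT p ∈ fareyTriangle ∧ bczT p = (p.2, nx (-p.1) p.2) := by
  obtain ⟨h1, h2, h3, h4, h5⟩ := hp
  have hk1 : (⌊(1 + p.1) / p.2⌋ : ℝ) * p.2 ≤ 1 + p.1 := by
    have h := Int.floor_le ((1 + p.1) / p.2)
    rw [le_div_iff₀ h3] at h; linarith
  have hk2 : 1 + p.1 - p.2 < (⌊(1 + p.1) / p.2⌋ : ℝ) * p.2 := by
    have h := Int.lt_floor_add_one ((1 + p.1) / p.2)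
    rw [div_lt_iff₀ h3] at h; nlinarith
  have e2 : (⌊(1 + p.1) / p.2⌋ : ℝ) * p.2 - p.1 = nx (-p.1) p.2 :=
    nx_unique h3 (by linarith) (by linarith) ⌊(1 + p.1) / p.2⌋ (by ring)
  have e : bczT p = (p.2, nx (-p.1) p.2) := by
    unfold bczT; rw [e2]
  refine ⟨?_, e⟩
  rw [e]
  exact mem_farey h3 h4 (nx_lb h3) (nx_ub h3)

lemma exc_step {p : ℕ → ℝ × ℝ} {s : ℕ} (h : IsExcursion p s) {i : ℕ} (hi : i < s) :
    p (i + 1) = ((p i).2, nx (-(p i).1) (p i).2) := by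
  rw [h.2.2.1 i hi]
  exact (bczT_mem (h.2.1 i hi.le)).2

/-- Restriction of an excursion to a subinterval `[u, v]`. -/
lemma subExc {p : ℕ → ℝ × ℝ} {s : ℕ} (h : IsExcursion p s) {u v : ℕ} (huv : u < v)
    (hv : v ≤ s)
    (hmid : ∀ i, u < i → i < v → (p u).1 < (p i).1 ∧ (p v).1 < (p i).1) :
    IsExcursion (fun i => p (u + i)) (v - u) := by
  obtain ⟨hs1, hmem, hstep, _⟩ := h
  refine ⟨by omega, ?_, ?_, ?_⟩
  · intro i hi
    exact hmem (u + i) (by omega)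
  · intro i hi
    have h1 : u + i < s := by omega
    have := hstep (u + i) h1
    simpa [show u + (i + 1) = u + i + 1 by omega] using this
  · intro i h0 hi
    have := hmid (u + i) (by omega) (by omega)
    simpa [show u + (v - u) = v by omega, Nat.add_zero] using this

/-- Specification of the canonical excursion from `a` to `b`. -/
def ExSpec (a b : ℝ) : Prop :=
  ∃ s p, IsExcursion p s ∧ p 0 = (a, nx b a) ∧ p s = (b, nx (-a) b)

lemma exBase {a b : ℝ} (ha : 0 < a) (ha1 : a ≤ 1) (hb : 0 < b) (hb1 : b ≤ 1)
    (hab : 1 < a + b) : ExSpec a b := by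
  have hmem0 : ((a, b) : ℝ × ℝ) ∈ fareyTriangle := ⟨ha, ha1, hb, hb1, hab⟩
  obtain ⟨hmem1, he⟩ := bczT_mem hmem0
  refine ⟨1, fun i => if i = 0 then (a, b) else bczT (a, b), ⟨le_rfl, ?_, ?_, ?_⟩, ?_, ?_⟩
  · intro i _
    by_cases h : i = 0 <;> simp [h, hmem0, hmem1]
  · intro i hi
    have : i = 0 := by omega
    simp [this]
  · intro i h0 h1; omega
  · have : nx b a = b := (nx_unique ha (by linarith) hb1 0 (by push_cast; ring)).symm
    simp [this]
  · simpa using he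

lemma exGlue {a b c : ℝ} (ha : 0 < a) (hb : 0 < b) (hc : c = a + b) (hc1 : c ≤ 1)
    (h1 : ExSpec a c) (h2 : ExSpec c b) : ExSpec a b := by
  obtain ⟨s₁, p₁, e₁, e₁0, e₁s⟩ := h1
  obtain ⟨s₂, p₂, e₂, e₂0, e₂s⟩ := h2
  have hc0 : 0 < c := by rw [hc]; linarith
  have hac : a < c := by rw [hc]; linarith
  have hbc : b < c := by rw [hc]; linarith
  have hj : p₁ s₁ = p₂ 0 := by
    rw [e₁s, e₂0]
    congr 1
    exact nx_congr hc0 (-1) (by rw [hc]; push_cast; ring)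
  have hs₁ : 1 ≤ s₁ := e₁.1
  have hs₂ : 1 ≤ s₂ := e₂.1
  refine ⟨s₁ + s₂, fun i => if i ≤ s₁ then p₁ i else p₂ (i - s₁), ⟨by omega, ?_, ?_, ?_⟩, ?_, ?_⟩
  · intro i hi
    by_cases h : i ≤ s₁
    · simpa [h] using e₁.2.1 i h
    · simpa [h] using e₂.2.1 (i - s₁) (by omega)
  · intro i hi
    rcases lt_trichotomy i s₁ with h | h | h
    · have h' : i + 1 ≤ s₁ := by omega
      simpa [h', h.le] using e₁.2.2.1 i h
    · subst h
      have h' : ¬ (i + 1 ≤ i) := by omega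
      have : p₂ (i + 1 - i) = bczT (p₂ 0) := by
        simpa [show i + 1 - i = 1 by omega] using e₂.2.2.1 0 (by omega)
      simp only [h', if_false, if_pos le_rfl]
      rw [this, hj]
    · have h' : ¬ (i + 1 ≤ s₁) := by omega
      have h'' : ¬ (i ≤ s₁) := by omega
      have : p₂ (i + 1 - s₁) = bczT (p₂ (i - s₁)) := by
        simpa [show i + 1 - s₁ = (i - s₁) + 1 by omega] using e₂.2.2.1 (i - s₁) (by omega)
      simp only [h', h'', if_false]
      rw [this]
  · intro i h0 hi
    have hx0 : (p₁ 0).1 = a := by rw [e₁0]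
    have hx1 : (p₁ s₁).1 = c := by rw [e₁s]
    have hx2 : (p₂ 0).1 = c := by rw [e₂0]
    have hx3 : (p₂ s₂).1 = b := by rw [e₂s]
    have hlast : ¬ (s₁ + s₂ ≤ s₁) := by omega
    simp only [if_pos (Nat.zero_le s₁ : 0 ≤ s₁), hlast, if_false,
      show s₁ + s₂ - s₁ = s₂ by omega, hx0, hx3]
    rcases lt_trichotomy i s₁ with h | h | h
    · have := e₁.2.2.2 i h0 h
      rw [hx0, hx1] at this
      simp only [if_pos h.le]
      exact ⟨this.1, by linarith [this.2]⟩
    · subst h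
      simp only [if_pos le_rfl, hx1]
      exact ⟨hac, hbc⟩
    · have := e₂.2.2.2 (i - s₁) (by omega) (by omega)
      rw [hx2, hx3] at this
      simp only [if_neg (by omega : ¬ i ≤ s₁)]
      exact ⟨by linarith [this.1], this.2⟩
  · simp only [if_pos (Nat.zero_le s₁ : 0 ≤ s₁), e₁0]
    congr 1
    exact nx_congr ha 1 (by rw [hc]; push_cast; ring)
  · have hlast : ¬ (s₁ + s₂ ≤ s₁) := by omega
    simp only [hlast, if_false, show s₁ + s₂ - s₁ = s₂ by omega, e₂s]
    congr 1
    exact nx_congr hb (-1) (by rw [hc]; push_cast; ring)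

lemma exMain : ∀ n : ℕ, ∀ a b : ℝ, 0 < a → a ≤ 1 → 0 < b → b ≤ 1 →
    1 - a - b ≤ (n : ℝ) * min a b → ExSpec a b := by
  intro n
  induction n with
  | zero =>
    intro a b ha ha1 hb hb1 hm
    rcases lt_or_ge 1 (a + b) with h | h
    · exact exBase ha ha1 hb hb1 h
    · have hab : a + b = 1 := le_antisymm h (by push_cast at hm; linarith)
      have h1 : ExSpec a 1 := exBase ha ha1 one_pos le_rfl (by linarith)
      have h2 : ExSpec 1 b := exBase one_pos le_rfl hb hb1 (by linarith)
      exact exGlue ha hb hab.symm le_rfl h1 h2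
  | succ n ih =>
    intro a b ha ha1 hb hb1 hm
    rcases lt_or_ge 1 (a + b) with h | h
    · exact exBase ha ha1 hb hb1 h
    · have hmina : min a b ≤ a := min_le_left _ _
      have hminb : min a b ≤ b := min_le_right _ _
      have hcast : ((n : ℝ) + 1) * min a b ≤ ((n : ℝ) + 1) * a :=
        mul_le_mul_of_nonneg_left hmina (by positivity)
      have hcast' : ((n : ℝ) + 1) * min a b ≤ ((n : ℝ) + 1) * b :=
        mul_le_mul_of_nonneg_left hminb (by positivity)
      push_cast at hm
      have m1 : 1 - a - (a + b) ≤ (n : ℝ) * min a (a + b) := by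
        rw [min_eq_left (by linarith)]
        nlinarith [hm, hcast]
      have m2 : 1 - (a + b) - b ≤ (n : ℝ) * min (a + b) b := by
        rw [min_eq_right (by linarith)]
        nlinarith [hm, hcast']
      exact exGlue ha hb rfl h
        (ih a (a + b) ha ha1 (by linarith) h m1)
        (ih (a + b) b (by linarith) h hb hb1 m2)

lemma exSpec_of {a b : ℝ} (ha : 0 < a) (ha1 : a ≤ 1) (hb : 0 < b) (hb1 : b ≤ 1) :
    ExSpec a b := by
  have hmin : 0 < min a b := lt_min ha hb
  obtain ⟨n, hn⟩ := exists_nat_ge ((1 - a - b) / min a b)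
  refine exMain n a b ha ha1 hb hb1 ?_
  rw [div_le_iff₀ hmin] at hn
  linarith

set_option maxHeartbeats 1600000 in
/-- Uniqueness: any excursion has forced endpoint second coordinates. -/
lemma uq : ∀ s : ℕ, ∀ p : ℕ → ℝ × ℝ, IsExcursion p s →
    (p 0).2 = nx (p s).1 (p 0).1 ∧ (p s).2 = nx (-(p 0).1) (p s).1 := by
  intro s
  induction s using Nat.strong_induction_on with
  | _ s ih =>
    intro p hp
    classical
    have hs1 : 1 ≤ s := hp.1
    have hmem := hp.2.1
    have hmid := hp.2.2.2
    obtain ⟨ha0, ha1, ha2, ha3, ha4⟩ := hmem 0 (by omega)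
    obtain ⟨hb0, hb1, hb2, hb3, hb4⟩ := hmem s le_rfl
    by_cases hs : s = 1
    · subst hs
      have hstep := exc_step hp (show 0 < 1 by omega)
      have h1 : (p 1).1 = (p 0).2 := by rw [hstep]
      constructor
      · rw [h1]
        exact nx_unique ha0 (by linarith) ha3 0 (by push_cast; ring)
      · rw [hstep]
    · have hs2 : 2 ≤ s := by omega
      -- leftmost minimal intermediate index
      have hPex : ∃ j, (1 ≤ j ∧ j ≤ s - 1) ∧
          ∀ i, 1 ≤ i → i ≤ s - 1 → (p j).1 ≤ (p i).1 := by
        obtain ⟨j, hjm, hjmin⟩ := Finset.exists_min_image (Finset.Icc 1 (s - 1))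
          (fun i => (p i).1) ⟨1, by simp; omega⟩
        rw [Finset.mem_Icc] at hjm
        exact ⟨j, hjm, fun i h1 h2 => hjmin i (Finset.mem_Icc.mpr ⟨h1, h2⟩)⟩
      set j := Nat.find hPex with hjdef
      obtain ⟨⟨hj1, hj2⟩, hjmin⟩ := Nat.find_spec hPex
      have hjlt : j < s := by omega
      set a := (p 0).1
      set b := (p s).1
      set c := (p j).1 with hcdef
      obtain ⟨hac, hbc⟩ := hmid j (by omega) hjlt
      obtain ⟨hc0, hc1, _, _, _⟩ := hmem j hjlt.le
      -- leftmost: strictly smaller than everything before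
      have hleft : ∀ i, 1 ≤ i → i < j → c < (p i).1 := by
        intro i hi1 hij
        have hnP := Nat.find_min hPex hij
        rcases lt_or_ge c (p i).1 with h | h
        · exact h
        · exfalso
          have heq : (p i).1 = c := le_antisymm h (hjmin i hi1 (by omega))
          exact hnP ⟨⟨hi1, by omega⟩, fun i' h1 h2 => heq ▸ hjmin i' h1 h2⟩
      -- left segment is an excursion from a to c
      have E1 : IsExcursion (fun i => p (0 + i)) (j - 0) := by
        refine subExc hp (by omega) (by omega) ?_
        intro i h1 h2
        exact ⟨(hmid i h1 (by omega)).1, hleft i h1 h2⟩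
      have IH1 := ih (j - 0) (by omega) _ E1
      simp only [Nat.zero_add, Nat.sub_zero, show (0:ℕ) + j = j from by omega] at IH1
      obtain ⟨IH1a, IH1b⟩ := IH1
      -- IH1a : (p 0).2 = nx c a ; IH1b : (p j).2 = nx (-a) c
      -- strictness of the minimum to the right
      have hstrict : ∀ i, j < i → i < s → c < (p i).1 := by
        by_contra hcon
        push_neg at hcon
        obtain ⟨i₀, hi₀1, hi₀2, hi₀3⟩ := hcon
        have heq0 : (p i₀).1 = c := le_antisymm hi₀3 (hjmin i₀ (by omega) (by omega))
        have hQex : ∃ i, j < i ∧ i ≤ s - 1 ∧ (p i).1 = c := ⟨i₀, hi₀1, by omega, heq0⟩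
        set j' := Nat.find hQex with hj'def
        obtain ⟨hj'1, hj'2, hj'3⟩ := Nat.find_spec hQex
        have hmidQ : ∀ i, j < i → i < j' → c < (p i).1 := by
          intro i h1 h2
          rcases lt_or_ge c (p i).1 with h | h
          · exact h
          · exfalso
            have heq : (p i).1 = c := le_antisymm h (hjmin i (by omega) (by omega))
            exact Nat.find_min hQex h2 ⟨h1, by omega, heq⟩
        have E' : IsExcursion (fun i => p (j + i)) (j' - j) := by
          refine subExc hp hj'1 (by omega) ?_
          intro i h1 h2
          refine ⟨hmidQ i h1 h2, ?_⟩
          rw [hj'3]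
          exact hmidQ i h1 h2
        have IH' := ih (j' - j) (by omega) _ E'
        simp only [Nat.add_zero, show j + (j' - j) = j' from by omega] at IH'
        have hcc : nx (-a) c = nx c c := by
          rw [← IH1b, IH'.1, hj'3]
        obtain ⟨k, hk⟩ := nx_inj hcc
        -- -a - c = k c, so a = (-k-1) c
        have hkc : a = ((-k - 1 : ℤ) : ℝ) * c := by push_cast; linarith
        have hkpos : (1 : ℤ) ≤ -k - 1 := by
          by_contra hcon2
          push_neg at hcon2
          have h0 : (-k - 1 : ℤ) ≤ 0 := by omega
          have h0' : ((-k - 1 : ℤ) : ℝ) ≤ 0 := by exact_mod_cast h0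
          nlinarith [hkc, ha0]
        have h1' : (1 : ℝ) ≤ ((-k - 1 : ℤ) : ℝ) := by exact_mod_cast hkpos
        nlinarith [hkc, hac, hc0, h1']
      -- right segment is an excursion from c to b
      have E2 : IsExcursion (fun i => p (j + i)) (s - j) := by
        refine subExc hp hjlt le_rfl ?_
        intro i h1 h2
        exact ⟨hstrict i h1 h2, by linarith [hstrict i h1 h2]⟩
      have IH2 := ih (s - j) (by omega) _ E2
      simp only [Nat.add_zero, show j + (s - j) = s from by omega] at IH2
      obtain ⟨IH2a, IH2b⟩ := IH2
      -- IH2a : (p j).2 = nx b c ; IH2b : (p s).2 = nx (-c) b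
      have hcb : nx (-a) c = nx b c := by rw [← IH1b, IH2a]
      obtain ⟨k, hk⟩ := nx_inj hcb
      -- -a - b = k c, with -2c < -a-b < 0, so k = -1
      have h1 : (k : ℝ) * c < 0 * c := by rw [← hk]; linarith
      have h2 : (-2 : ℝ) * c < (k : ℝ) * c := by rw [← hk]; linarith
      have hklt : (k : ℝ) < 0 := lt_of_mul_lt_mul_right h1 hc0.le
      have hkgt : (-2 : ℝ) < (k : ℝ) := lt_of_mul_lt_mul_right h2 hc0.le
      have hklt' : k < 0 := by exact_mod_cast hklt
      have hkgt' : (-2 : ℤ) < k := by exact_mod_cast hkgt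
      have hkeq : k = -1 := by omega
      have hceq : c = a + b := by rw [hkeq] at hk; push_cast at hk; linarith
      have ha' : a = (p 0).1 := rfl
      have hb' : b = (p s).1 := rfl
      clear_value j a b c
      constructor
      · rw [IH1a, ← ha', ← hcdef]
        refine nx_congr ha0 1 ?_
        push_cast
        linarith [hceq]
      · rw [IH2b, ← hb', ← hcdef]
        refine nx_congr hb0 (-1) ?_
        push_cast
        linarith [hceq]

theorem excursion_exists_unique (a b : ℝ) (ha0 : 0 < a) (ha1 : a ≤ 1)
    (hb0 : 0 < b) (hb1 : b ≤ 1) :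
    (∃ (s : ℕ) (p : ℕ → ℝ × ℝ), IsExcursion p s ∧ (p 0).1 = a ∧ (p s).1 = b) ∧
      (∀ (s s' : ℕ) (p p' : ℕ → ℝ × ℝ), IsExcursion p s → IsExcursion p' s' →
        (p 0).1 = a → (p s).1 = b → (p' 0).1 = a → (p' s').1 = b →
        s = s' ∧ ∀ i ≤ s, p i = p' i) := by
  constructor
  · obtain ⟨s, p, hexc, h0, hs⟩ := exSpec_of ha0 ha1 hb0 hb1
    exact ⟨s, p, hexc, by rw [h0], by rw [hs]⟩
  · intro s s' p p' hp hp' h1 h2 h3 h4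
    have u1 := uq s p hp
    have u2 := uq s' p' hp'
    have e0 : p 0 = p' 0 := by
      have hsnd : (p 0).2 = (p' 0).2 := by
        rw [u1.1, u2.1, h1, h2, h3, h4]
      exact Prod.ext (by rw [h1, h3]) hsnd
    have fwd : ∀ i, i ≤ s → i ≤ s' → p i = p' i := by
      intro i
      induction i with
      | zero => intro _ _; exact e0
      | succ i ihh =>
        intro hle hle'
        have heq := ihh (by omega) (by omega)
        rw [hp.2.2.1 i (by omega), hp'.2.2.1 i (by omega), heq]
    have hss : s = s' := by
      rcases lt_trichotomy s s' with h | h | h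
      · exfalso
        have hval : (p' s).1 = b := by rw [← fwd s le_rfl h.le, h2]
        have := (hp'.2.2.2 s (by have := hp.1; omega) h).2
        rw [h4, hval] at this
        exact lt_irrefl b this
      · exact h
      · exfalso
        have hval : (p s').1 = b := by rw [fwd s' h.le le_rfl, h4]
        have := (hp.2.2.2 s' (by have := hp'.1; omega) h).2
        rw [h2, hval] at this
        exact lt_irrefl b this
    subst hss
    exact ⟨rfl, fun i hi => fwd i hi hi⟩
end

section
/- (Reverse of a BCZ orbit is a BCZ orbit.) Let ((a_i,b_i))_{i∈ℤ} be a bi-infinite sequence of points of the Farey triangle Ω with T(a_i,b_i) = (a_{i+1},b_{i+1}) for all i ∈ ℤ, and fix s ∈ ℤ. Define (c_i,d_i) := (b_{s−1−i}, a_{s−1−i}) for i ∈ ℤ. Then (c_i,d_i) ∈ Ω and T(c_i,d_i) = (c_{i+1},d_{i+1}) for all i ∈ ℤ; equivalently, T^{i}(b_{s−1}, a_{s−1}) = (b_{s−1−i}, a_{s−1−i}) for all i ≥ 0. -/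
lemma bczT_rev (q : ℝ × ℝ) (hq : q ∈ fareyTriangle) :
    bczT ((bczT q).2, (bczT q).1) = (q.2, q.1) := by
  obtain ⟨ha, ha1, hb, hb1, hab⟩ := hq
  set a := q.1
  set b := q.2
  set k := ⌊(1 + a) / b⌋ with hk
  have hfloor : ⌊(1 + ((k : ℝ) * b - a)) / b⌋ = k := by
    have h1 : (1 + ((k : ℝ) * b - a)) / b = (k : ℝ) + (1 - a) / b := by
      field_simp; ring
    rw [h1]
    rw [Int.floor_intCast_add]
    have : ⌊(1 - a) / b⌋ = 0 := by
      rw [Int.floor_eq_zero_iff]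
      constructor
      · apply div_nonneg (by linarith) hb.le
      · rw [div_lt_one hb]; linarith
    simp [this]
  simp only [bczT, ← hk]
  ext
  · rfl
  · simp only
    rw [hfloor]
    ring

theorem reverse_bcz_orbit (p : ℤ → ℝ × ℝ)
    (hΩ : ∀ i, p i ∈ fareyTriangle) (hT : ∀ i, bczT (p i) = p (i + 1)) (s : ℤ) :
    (∀ i : ℤ, ((p (s - 1 - i)).2, (p (s - 1 - i)).1) ∈ fareyTriangle ∧
        bczT ((p (s - 1 - i)).2, (p (s - 1 - i)).1) =
          ((p (s - 1 - (i + 1))).2, (p (s - 1 - (i + 1))).1)) ∧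
      (∀ i : ℕ, bczT^[i] ((p (s - 1)).2, (p (s - 1)).1) =
        ((p (s - 1 - (i : ℤ))).2, (p (s - 1 - (i : ℤ))).1)) := by
  have key : ∀ j : ℤ, bczT ((p (j+1)).2, (p (j+1)).1) = ((p j).2, (p j).1) := by
    intro j
    have := bczT_rev (p j) (hΩ j)
    rwa [hT j] at this
  constructor
  · intro i
    refine ⟨?_, ?_⟩
    · obtain ⟨h1, h2, h3, h4, h5⟩ := hΩ (s - 1 - i)
      exact ⟨h3, h4, h1, h2, by linarith⟩
    · have h := key (s - 1 - (i + 1))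
      have he : s - 1 - (i + 1) + 1 = s - 1 - i := by ring
      rwa [he] at h
  · intro i
    induction i with
    | zero => simp
    | succ n ih =>
      rw [Function.iterate_succ_apply', ih]
      have h := key (s - 1 - ((n : ℤ) + 1))
      have he : s - 1 - ((n : ℤ) + 1) + 1 = s - 1 - (n : ℤ) := by ring
      rw [he] at h
      rw [h]
      norm_num
end

section
/- (Upper bound for the length of an excursion.) For every excursion ((a_i,b_i))_{i=0}^{s} of the BCZ map, s ≤ 1/(a_0 · a_s). -/
def excV (k : ℕ → ℤ) : ℕ → ℤ × ℤ
  | 0 => (1, 0)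
  | 1 => (0, 1)
  | n+2 => (k n * (excV k (n+1)).1 - (excV k n).1, k n * (excV k (n+1)).2 - (excV k n).2)

def sig (v w : ℤ × ℤ) : ℤ := v.1 * w.2 - v.2 * w.1

lemma sig_excV (k : ℕ → ℤ) : ∀ n, sig (excV k n) (excV k (n+1)) = 1
  | 0 => by simp [sig, excV]
  | n+1 => by
      have ih := sig_excV k n
      simp only [sig, excV] at ih ⊢
      linear_combination ih

lemma ivt_int (f : ℕ → ℤ) : ∀ s : ℕ, 0 < f 0 → f s ≤ 0 → ∃ i < s, 0 < f i ∧ f (i+1) ≤ 0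
  | 0 => fun h0 hs => absurd hs (by omega)
  | s+1 => fun h0 hs => by
      by_cases h : f s ≤ 0
      · obtain ⟨i, hi, h1, h2⟩ := ivt_int f s h0 h
        exact ⟨i, by omega, h1, h2⟩
      · exact ⟨s, by omega, by omega, hs⟩

set_option maxHeartbeats 1000000 in
lemma main_aux (a : ℕ → ℝ) (k : ℕ → ℤ) (s : ℕ) (hs : 1 ≤ s)
    (hpos : ∀ i ≤ s + 1, 0 < a i) (hle : ∀ i ≤ s + 1, a i ≤ 1)
    (hsum : ∀ i ≤ s, 1 < a i + a (i + 1))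
    (hrec : ∀ i < s, a (i + 2) = (k i : ℝ) * a (i + 1) - a i)
    (hmid : ∀ i, 0 < i → i < s → a 0 < a i ∧ a s < a i) :
    (s : ℝ) ≤ 1 / (a 0 * a s) := by
  -- a n = P_n a0 + Q_n a1
  have hD : ∀ n, n ≤ s →
      (a n = ((excV k n).1 : ℝ) * a 0 + ((excV k n).2 : ℝ) * a 1 ∧
       a (n+1) = ((excV k (n+1)).1 : ℝ) * a 0 + ((excV k (n+1)).2 : ℝ) * a 1) := by
    intro n
    induction n with
    | zero => intro _; constructor <;> simp [excV]
    | succ m ih =>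
      intro hm
      obtain ⟨h1, h2⟩ := ih (by omega)
      refine ⟨h2, ?_⟩
      have hr := hrec m (by omega)
      rw [hr, h1, h2]
      show _ = ((excV k (m+2)).1 : ℝ) * a 0 + ((excV k (m+2)).2 : ℝ) * a 1
      simp only [excV]
      push_cast
      ring
  have haφ : ∀ n, n ≤ s + 1 → a n = ((excV k n).1 : ℝ) * a 0 + ((excV k n).2 : ℝ) * a 1 := by
    intro n hn
    rcases Nat.lt_or_ge n (s+1) with h | h
    · exact (hD n (by omega)).1
    · have he : n = s + 1 := by omega
      subst he; exact (hD s le_rfl).2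
  have hsigR : ∀ n, ((excV k n).1 : ℝ) * ((excV k (n+1)).2 : ℝ)
      - ((excV k n).2 : ℝ) * ((excV k (n+1)).1 : ℝ) = 1 := by
    intro n
    have := sig_excV k n
    simp only [sig] at this
    exact_mod_cast congrArg (Int.cast : ℤ → ℝ) this
  have h_expand : ∀ z : ℤ × ℤ, ∀ n, n ≤ s →
      (z.1 : ℝ) * a 0 + (z.2 : ℝ) * a 1
        = -((sig (excV k (n+1)) z : ℤ) : ℝ) * a n + ((sig (excV k n) z : ℤ) : ℝ) * a (n+1) := by
    intro z n hn
    rw [haφ n (by omega), haφ (n+1) (by omega)]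
    simp only [sig]
    push_cast
    linear_combination (-( (z.1:ℝ) * a 0 + (z.2:ℝ) * a 1)) * hsigR n
  have hW : ∀ n, n ≤ s →
      a n * ((excV k (n+1)).2 : ℝ) - a (n+1) * ((excV k n).2 : ℝ) = a 0 := by
    intro n hn
    rw [haφ n (by omega), haφ (n+1) (by omega)]
    linear_combination a 0 * hsigR n
  have hQlb : ∀ n, n ≤ s → (n : ℝ) * (a 0 * a n) ≤ ((excV k n).2 : ℝ) := by
    intro n
    induction n with
    | zero => intro _; simp [excV]
    | succ m ih =>
      intro hm
      have hQ := ih (by omega)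
      have hw := hW m (by omega)
      have p0 := hpos 0 (by omega)
      have pm := hpos m (by omega)
      have pm1 := hpos (m+1) (by omega)
      have lm := hle m (by omega)
      have lm1 := hle (m+1) (by omega)
      have t1 : a (m+1) * ((m:ℝ) * (a 0 * a m)) ≤ a (m+1) * ((excV k m).2:ℝ) :=
        mul_le_mul_of_nonneg_left hQ pm1.le
      have t2 : a 0 * (a m * a (m+1)) ≤ a 0 * 1 := by
        apply mul_le_mul_of_nonneg_left _ p0.le
        nlinarith
      have key2 : (((m:ℝ)+1) * (a 0 * a (m+1))) * a m ≤ ((excV k (m+1)).2 : ℝ) * a m := by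
        nlinarith [t1, t2, hw]
      have h3 := le_of_mul_le_mul_right key2 pm
      push_cast
      linarith [h3]
  have p0 := hpos 0 (by omega)
  have ps := hpos s (by omega)
  have p1 := hpos 1 (by omega)
  have l0 := hle 0 (by omega)
  have ls := hle s (by omega)
  have hNlbR : (s:ℝ) * (a 0 * a s) ≤ (((excV k s).2 : ℤ) : ℝ) := hQlb s le_rfl
  have hsR : (1:ℝ) ≤ (s:ℝ) := by exact_mod_cast hs
  have hNposR : (0:ℝ) < (((excV k s).2 : ℤ) : ℝ) :=
    lt_of_lt_of_le (by nlinarith [mul_pos p0 ps]) hNlbR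
  have hNpos : (0:ℤ) < (excV k s).2 := by exact_mod_cast hNposR
  have hNle : (excV k s).2 ≤ 1 := by
    by_contra hcon
    push_neg at hcon
    set Ps : ℤ := (excV k s).1 with hPsdef
    set N : ℤ := (excV k s).2 with hNdef
    have hN2 : 2 ≤ N := hcon
    have hsig1 : (excV k (s-1)).1 * N - (excV k (s-1)).2 * Ps = 1 := by
      have h1 := sig_excV k (s-1)
      rw [Nat.sub_add_cancel hs] at h1
      simpa [sig, hPsdef, hNdef] using h1
    have hndvd : ¬ (N ∣ Ps) := by
      rintro ⟨c, hc⟩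
      have hdvd : N ∣ 1 := ⟨(excV k (s-1)).1 - (excV k (s-1)).2 * c, by
        linear_combination -hsig1 - (excV k (s-1)).2 * hc⟩
      have := Int.le_of_dvd one_pos hdvd
      omega
    have hNne : N ≠ 0 := by omega
    have hr0 : 0 ≤ Ps % N := Int.emod_nonneg Ps hNne
    have hrN : Ps % N < N := Int.emod_lt_of_pos Ps (by omega)
    have hrne : Ps % N ≠ 0 := fun h0 => hndvd (Int.dvd_of_emod_eq_zero h0)
    have hdm : N * (Ps / N) + Ps % N = Ps := Int.mul_ediv_add_emod Ps N
    set r : ℤ := Ps % N with hrdef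
    set q : ℤ := Ps / N with hqdef
    have has : a s = (Ps:ℝ) * a 0 + (N:ℝ) * a 1 := haφ s (by omega)
    have hdmR : (N:ℝ) * (q:ℝ) + (r:ℝ) = (Ps:ℝ) := by exact_mod_cast hdm
    have hNR : (0:ℝ) < (N:ℝ) := by exact_mod_cast (by omega : (0:ℤ) < N)
    have hNr1 : (1:ℝ) ≤ (N:ℝ) - (r:ℝ) := by
      have : (1:ℤ) ≤ N - r := by omega
      exact_mod_cast this
    have hr1 : (1:ℝ) ≤ (r:ℝ) := by exact_mod_cast (by omega : (1:ℤ) ≤ r)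
    have hN1' : (1:ℝ) ≤ (N:ℝ) - 1 := by
      have : (1:ℤ) ≤ N - 1 := by omega
      push_cast at this ⊢
      linarith
    have hφ0 : (N:ℝ) * (((q:ℝ)+1) * a 0 + 1 * a 1) = ((N:ℝ) - r) * a 0 + a s := by
      linear_combination a 0 * hdmR - has
    have hφ1 : (N:ℝ) * (((Ps:ℝ) - q) * a 0 + ((N:ℝ)-1) * a 1) = (r:ℝ) * a 0 + ((N:ℝ)-1) * a s := by
      linear_combination (-(a 0)) * hdmR - ((N:ℝ) - 1) * has
    have hφ0pos : 0 < ((q:ℝ)+1) * a 0 + 1 * a 1 := by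
      by_contra hcc
      push_neg at hcc
      nlinarith [hφ0, mul_nonpos_of_nonneg_of_nonpos hNR.le hcc]
    have hφ1pos : 0 < ((Ps:ℝ) - q) * a 0 + ((N:ℝ)-1) * a 1 := by
      by_contra hcc
      push_neg at hcc
      nlinarith [hφ1, mul_nonpos_of_nonneg_of_nonpos hNR.le hcc]
    have hSsum : (((q:ℝ)+1) * a 0 + 1 * a 1) + (((Ps:ℝ) - q) * a 0 + ((N:ℝ)-1) * a 1)
        = a 0 + a s := by
      have hS : (N:ℝ) * ((((q:ℝ)+1) * a 0 + 1 * a 1) + (((Ps:ℝ) - q) * a 0 + ((N:ℝ)-1) * a 1))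
          = (N:ℝ) * (a 0 + a s) := by linear_combination hφ0 + hφ1
      exact mul_left_cancel₀ (ne_of_gt hNR) hS
    have hsz0 : sig (excV k s) (q+1, 1) ≤ -1 := by
      have he : Ps * 1 - N * (q+1) = r - N := by linear_combination -hdm
      simp only [sig, ← hPsdef, ← hNdef]
      omega
    have hsz1 : sig (excV k s) (Ps - q, N - 1) ≤ -1 := by
      have he : Ps * (N-1) - N * (Ps - q) = -r := by linear_combination hdm
      simp only [sig, ← hPsdef, ← hNdef]
      omega
    have key : ∃ z : ℤ × ℤ,
        (0:ℝ) < (z.1:ℝ) * a 0 + (z.2:ℝ) * a 1 ∧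
        2 * ((z.1:ℝ) * a 0 + (z.2:ℝ) * a 1) ≤ a 0 + a s ∧
        0 < z.2 ∧ sig (excV k s) z ≤ -1 := by
      rcases le_total (((q:ℝ)+1) * a 0 + 1 * a 1) (((Ps:ℝ) - q) * a 0 + ((N:ℝ)-1) * a 1) with hc | hc
      · refine ⟨(q+1, 1), ?_, ?_, one_pos, hsz0⟩
        · push_cast
          linarith [hφ0pos]
        · push_cast
          linarith [hSsum]
      · refine ⟨(Ps - q, N - 1), ?_, ?_, by omega, hsz1⟩
        · push_cast
          linarith [hφ1pos]
        · push_cast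
          linarith [hSsum]
    obtain ⟨z, hzpos, hzhalf, hz2, hzs⟩ := key
    have hβ0 : 0 < sig (excV k 0) z := by simpa [sig, excV] using hz2
    obtain ⟨i, his, hfi, hfi1⟩ := ivt_int (fun j => sig (excV k j) z) s hβ0 (by
      show sig (excV k s) z ≤ 0
      omega)
    have hfi' : 0 < sig (excV k i) z := hfi
    have hfi1' : sig (excV k (i+1)) z ≤ 0 := hfi1
    have hexp := h_expand z i (by omega)
    rcases lt_or_eq_of_le hfi1' with hlt | heq
    · have c1 : (1:ℝ) ≤ -((sig (excV k (i+1)) z : ℤ):ℝ) := by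
        have : (1:ℤ) ≤ -(sig (excV k (i+1)) z) := by omega
        exact_mod_cast this
      have c2 : (1:ℝ) ≤ ((sig (excV k i) z : ℤ):ℝ) := by
        have : (1:ℤ) ≤ sig (excV k i) z := hfi'
        exact_mod_cast this
      have pi := hpos i (by omega)
      have pi1 := hpos (i+1) (by omega)
      have t1 : 1 * a i ≤ -((sig (excV k (i+1)) z : ℤ):ℝ) * a i :=
        mul_le_mul_of_nonneg_right c1 pi.le
      have t2 : 1 * a (i+1) ≤ ((sig (excV k i) z : ℤ):ℝ) * a (i+1) :=
        mul_le_mul_of_nonneg_right c2 pi1.le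
      have h1 : a i + a (i+1) ≤ (z.1:ℝ) * a 0 + (z.2:ℝ) * a 1 := by
        rw [hexp]
        linarith [t1, t2]
      have hsum_i := hsum i (by omega)
      linarith [hzhalf, l0, ls]
    · have hi1s : i + 1 < s := by
        rcases (by omega : i+1 < s ∨ i+1 = s) with hcase | hcase
        · exact hcase
        · exfalso
          rw [hcase] at heq
          omega
      have hexp2 := h_expand z (i+1) (by omega)
      rw [heq] at hexp2
      push_cast at hexp2
      have pi1 := hpos (i+1) (by omega)
      have hcneg : sig (excV k (i+2)) z < 0 := by
        by_contra hcc
        push_neg at hcc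
        have hccR : (0:ℝ) ≤ ((sig (excV k (i+2)) z : ℤ):ℝ) := by exact_mod_cast hcc
        have hnp : -((sig (excV k (i+2)) z : ℤ):ℝ) * a (i+1) ≤ 0 :=
          mul_nonpos_of_nonpos_of_nonneg (by linarith) pi1.le
        linarith [hzpos, hexp2, hnp]
      have hc1 : (1:ℝ) ≤ -((sig (excV k (i+2)) z : ℤ):ℝ) := by
        have : (1:ℤ) ≤ -(sig (excV k (i+2)) z) := by omega
        exact_mod_cast this
      have hmid1 := hmid (i+1) (by omega) hi1s
      have t3 : 1 * a (i+1) ≤ -((sig (excV k (i+2)) z : ℤ):ℝ) * a (i+1) :=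
        mul_le_mul_of_nonneg_right hc1 pi1.le
      have hup : a (i+1) ≤ (z.1:ℝ) * a 0 + (z.2:ℝ) * a 1 := by
        linarith [hexp2, t3]
      linarith [hzhalf, hmid1.1, hmid1.2, hup]
  have hN1 : (excV k s).2 = 1 := by omega
  have hfin : (s:ℝ) * (a 0 * a s) ≤ 1 := by
    rw [hN1] at hNlbR
    push_cast at hNlbR
    linarith
  rw [le_div_iff₀ (mul_pos p0 ps)]
  exact hfin



theorem excursion_length_upper_bound (p : ℕ → ℝ × ℝ) (s : ℕ) (h : IsExcursion p s) :
    (s : ℝ) ≤ 1 / ((p 0).1 * (p s).1) := by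
  obtain ⟨hs1, hΩ, hT, hm⟩ := h
  set a : ℕ → ℝ := fun i => if i ≤ s then (p i).1 else (p s).2 with ha
  have ha1 : ∀ i, i ≤ s → a i = (p i).1 := by
    intro i hi; simp [ha, hi]
  have ha2 : ∀ i, i ≤ s → a (i+1) = (p i).2 := by
    intro i hi
    rcases lt_or_eq_of_le hi with hlt | heq
    · rw [ha1 (i+1) (by omega), hT i hlt]
      rfl
    · subst heq
      simp [ha]
  have hmain := main_aux a (fun i => ⌊(1 + (p i).1) / (p i).2⌋) s hs1
    (by -- hpos
      intro i hi
      rcases Nat.lt_or_ge i (s+1) with hlt | hge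
      · rw [ha1 i (by omega)]; exact (hΩ i (by omega)).1
      · have : i = s + 1 := by omega
        subst this
        rw [ha2 s le_rfl]
        exact (hΩ s le_rfl).2.2.1)
    (by -- hle
      intro i hi
      rcases Nat.lt_or_ge i (s+1) with hlt | hge
      · rw [ha1 i (by omega)]; exact (hΩ i (by omega)).2.1
      · have : i = s + 1 := by omega
        subst this
        rw [ha2 s le_rfl]
        exact (hΩ s le_rfl).2.2.2.1)
    (by -- hsum
      intro i hi
      rw [ha1 i hi, ha2 i hi]
      exact (hΩ i hi).2.2.2.2)
    (by -- hrec
      intro i hi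
      rw [ha2 (i+1) (by omega), hT i hi, ha1 i (by omega), ha2 i (by omega)]
      rfl)
    (by -- hmid
      intro i h0 his
      rw [ha1 0 (by omega), ha1 i (by omega), ha1 s le_rfl]
      exact hm i h0 his)
  rwa [ha1 0 (by omega), ha1 s le_rfl] at hmain
end
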